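/- arXiv:2406.13160 — 4 statements merged into one kernel-verified Lean document; each statement's English description precedes it below -/
import Mathlib

section
/- For any x ∈ Â, i ∈ I and m ∈ Z, one has M(f_{i,m−1}·x) = M(x·f_{i,m+1}), where M : Â → Q(q^{1/2}) is the projection onto the component of the identity in the weight-product decomposition of Â. -/
/- Common setting: a symmetrizable generalized Cartan matrix, the field
`𝕂 = ℚ(q^{1/2})` (with `sqv = q^{1/2}` and `q = qh = sqv²`), quantum integers, the bosonic
extension `hA A` presented by the `q`-Serre relations and the bosonic commutation
relations, its weight spaces and distinguished subalgebras, and the root-lattice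
pairing. -/

set_option maxHeartbeats 1000000
set_option synthInstance.maxHeartbeats 400000

noncomputable section

structure GCM (I : Type) where
  c : I → I → ℤ
  d : I → ℤ
  d_pos : ∀ i, 0 < d i
  diag : ∀ i, c i i = 2
  offdiag : ∀ i j, i ≠ j → c i j ≤ 0
  dsymm : ∀ i j, d i * c i j = d j * c j i

abbrev 𝕂 : Type := RatFunc ℚ

/-- The square root `q^{1/2}` of `q`. -/
def sqv : 𝕂 := RatFunc.X

/-- The indeterminate `q = (q^{1/2})²`. -/
def qh : 𝕂 := sqv ^ 2

def qNum (t : 𝕂) (n : ℕ) : 𝕂 := (t ^ n - t⁻¹ ^ n) / (t - t⁻¹)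

def qFact (t : 𝕂) (n : ℕ) : 𝕂 := ∏ k ∈ Finset.range n, qNum t (k + 1)

def qBinom (t : 𝕂) (m k : ℕ) : 𝕂 := qFact t m / (qFact t k * qFact t (m - k))

variable {I : Type} [DecidableEq I]

/-- `q_i = q^{d_i}`. -/
def qd (A : GCM I) (i : I) : 𝕂 := qh ^ A.d i

/-- `ζ_i = 1 - q_i²`. -/
def zi (A : GCM I) (i : I) : 𝕂 := 1 - qd A i ^ 2

/-- The `q`-Serre element `Σ_{k=0}^{b_{ij}} (-1)^k [b_{ij} choose k]_{q_i} a^k b a^{b_{ij}-k}`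
for elements `a, b` of any `𝕂`-algebra, where `b_{ij} = 1 - c_{ij}`. -/
def serreIn {R : Type} [Ring R] [Algebra 𝕂 R] (A : GCM I) (i j : I) (a b : R) : R :=
  ∑ k ∈ Finset.range ((1 - A.c i j).toNat + 1),
    ((-1 : 𝕂) ^ k * qBinom (qd A i) ((1 - A.c i j).toNat) k) •
      (a ^ k * b * a ^ ((1 - A.c i j).toNat - k))

/-- The defining relations of the bosonic extension: (a) for each `p`, the `q`-Serre
relations among the `f_{i,p}`; (b) for `m < p`,
`f_{i,m} f_{j,p} = q^{(-1)^{p-m+1}(α_i,α_j)} f_{j,p} f_{i,m} + δ_{(j,p),(i,m+1)}(1-q_i²)`. -/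
inductive hARel (A : GCM I) : FreeAlgebra 𝕂 (I × ℤ) → FreeAlgebra 𝕂 (I × ℤ) → Prop
  | serre (i j : I) (p : ℤ) (h : i ≠ j) :
      hARel A (serreIn A i j (FreeAlgebra.ι 𝕂 (i, p)) (FreeAlgebra.ι 𝕂 (j, p))) 0
  | comm (i j : I) (m p : ℤ) (h : m < p) :
      hARel A (FreeAlgebra.ι 𝕂 (i, m) * FreeAlgebra.ι 𝕂 (j, p))
        (qh ^ (((p - m + 1).negOnePow : ℤ) * (A.d i * A.c i j)) •
            (FreeAlgebra.ι 𝕂 (j, p) * FreeAlgebra.ι 𝕂 (i, m))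
          + if j = i ∧ p = m + 1 then ((1 : 𝕂) - qd A i ^ 2) • 1 else 0)

/-- The bosonic extension `Â` associated with the generalized Cartan matrix. -/
abbrev hA (A : GCM I) : Type := RingQuot (hARel A)

/-- The generator `f_{i,p}` of the bosonic extension. -/
def ff (A : GCM I) (i : I) (p : ℤ) : hA A :=
  RingQuot.mkAlgHom 𝕂 (hARel A) (FreeAlgebra.ι 𝕂 (i, p))

/-- The symmetric bilinear pairing on the root lattice, `(α_i, α_j) = d_i c_{ij}`. -/
def ip (A : GCM I) (β γ : I →₀ ℤ) : ℤ :=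
  β.sum fun i a => γ.sum fun j b => a * b * (A.d i * A.c i j)

/-- `α_{i,m} = (-1)^m α_i` as an element of the root lattice. -/
def aim (i : I) (m : ℤ) : I →₀ ℤ := Finsupp.single i ((m.negOnePow : ℤ))

/-- The weight space of weight `β` of `Â`, where `wt (f_{i,p}) = (-1)^{p+1} α_i`. -/
def hAwt (A : GCM I) (β : I →₀ ℤ) : Submodule 𝕂 (hA A) :=
  Submodule.span 𝕂 {x | ∃ l : List (I × ℤ),
    (l.map fun p => Finsupp.single p.1 (((p.2 + 1).negOnePow : ℤ))).sum = β ∧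
    x = (l.map fun p => ff A p.1 p.2).prod}

/-- The subalgebra `Â[a,b]` generated by `{f_{i,k} | a ≤ k ≤ b}`. -/
def hAband (A : GCM I) (a b : ℤ) : Subalgebra 𝕂 (hA A) :=
  Algebra.adjoin 𝕂 {x | ∃ i k, a ≤ k ∧ k ≤ b ∧ x = ff A i k}

/-- The subalgebra `Â[m]`. -/
def hAk (A : GCM I) (m : ℤ) : Subalgebra 𝕂 (hA A) := hAband A m m

/-- The subalgebra `Â_{≥ m}`. -/
def hAge (A : GCM I) (m : ℤ) : Subalgebra 𝕂 (hA A) :=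
  Algebra.adjoin 𝕂 {x | ∃ i k, m ≤ k ∧ x = ff A i k}

/-- The subalgebra `Â_{≤ m}`. -/
def hAle (A : GCM I) (m : ℤ) : Subalgebra 𝕂 (hA A) :=
  Algebra.adjoin 𝕂 {x | ∃ i k, k ≤ m ∧ x = ff A i k}

/-- The subalgebra `Â_{> m}`. -/
def hAgt (A : GCM I) (m : ℤ) : Subalgebra 𝕂 (hA A) := hAge A (m + 1)

/-- The subalgebra `Â_{< m}`. -/
def hAlt (A : GCM I) (m : ℤ) : Subalgebra 𝕂 (hA A) := hAle A (m - 1)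


open List Submodule

variable {I : Type} [DecidableEq I] (A : GCM I)

/-- Product of a word of generators. -/
def P (l : List (I × ℤ)) : hA A := (l.map fun p => ff A p.1 p.2).prod

@[simp] lemma P_nil : P A ([] : List (I × ℤ)) = 1 := rfl

@[simp] lemma P_cons (x : I × ℤ) (l : List (I × ℤ)) :
    P A (x :: l) = ff A x.1 x.2 * P A l := by simp [P]

@[simp] lemma P_append (l l' : List (I × ℤ)) :
    P A (l ++ l') = P A l * P A l' := by simp [P]

@[simp] lemma P_singleton (x : I × ℤ) : P A [x] = ff A x.1 x.2 := by simp [P]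

/-- Weakly descending (by level) words. -/
def Srt (l : List (I × ℤ)) : Prop := l.Pairwise (fun p q => q.2 ≤ p.2)

/-- The commutation relation in `hA A`. -/
lemma comm_rel (i j : I) (m p : ℤ) (h : m < p) :
    ff A i m * ff A j p =
      (qh ^ (((p - m + 1).negOnePow : ℤ) * (A.d i * A.c i j))) • (ff A j p * ff A i m)
      + (if j = i ∧ p = m + 1 then ((1 : 𝕂) - qd A i ^ 2) • (1 : hA A) else 0) := by
  have h1 := RingQuot.mkAlgHom_rel 𝕂 (hARel.comm (A := A) i j m p h)
  simp only [map_mul, map_add, map_smul, map_one, map_zero,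
    apply_ite (RingQuot.mkAlgHom 𝕂 (hARel A))] at h1
  simpa [ff] using h1



variable {I : Type} [DecidableEq I] (A : GCM I)
open List Submodule

/-- Span of sorted monomials with levels bounded by `c`. -/
def SpS (c : ℤ) : Submodule 𝕂 (hA A) :=
  Submodule.span 𝕂 {z | ∃ r, Srt r ∧ (∀ p ∈ r, p.2 ≤ c) ∧ z = P A r}

lemma ins (x : I × ℤ) : ∀ (s : List (I × ℤ)), Srt s → ∀ c : ℤ, x.2 ≤ c →
    (∀ p ∈ s, p.2 ≤ c) → ff A x.1 x.2 * P A s ∈ SpS A c := by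
  intro s
  induction s with
  | nil =>
    intro _ c hx _
    exact subset_span ⟨[x], List.pairwise_singleton _ _, by simpa using hx, by simp⟩
  | cons y s' IH =>
    intro hs c hx hsc
    have hs' : Srt s' := hs.tail
    have hys' : ∀ p ∈ s', p.2 ≤ y.2 := (List.pairwise_cons.mp hs).1
    rcases le_or_gt y.2 x.2 with h | h
    · refine subset_span ⟨x :: y :: s', ?_, ?_, by simp⟩
      · exact List.pairwise_cons.mpr ⟨by
          intro p hp
          rcases List.mem_cons.mp hp with rfl | hp
          · exact h
          · exact (hys' p hp).trans h, hs⟩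
      · intro p hp
        rcases List.mem_cons.mp hp with rfl | hp
        · exact hx
        · exact hsc p hp
    · have hrel := comm_rel A x.1 y.1 x.2 y.2 h
      have hyc : y.2 ≤ c := hsc y (List.mem_cons_self)
      have h1 : ff A x.1 x.2 * P A (y :: s') =
          (qh ^ (((y.2 - x.2 + 1).negOnePow : ℤ) * (A.d x.1 * A.c x.1 y.1))) •
            (ff A y.1 y.2 * (ff A x.1 x.2 * P A s'))
          + (if y.1 = x.1 ∧ y.2 = x.2 + 1 then ((1 : 𝕂) - qd A x.1 ^ 2) • (1 : hA A) else 0)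
              * P A s' := by
        rw [P_cons, ← mul_assoc, hrel, add_mul, smul_mul_assoc, mul_assoc]
      have h2 : ff A x.1 x.2 * P A s' ∈ SpS A y.2 := IH hs' y.2 h.le hys'
      have h3 : ff A y.1 y.2 * (ff A x.1 x.2 * P A s') ∈ SpS A c := by
        refine Submodule.span_induction
          (p := fun z _ => ff A y.1 y.2 * z ∈ SpS A c) ?_ ?_ ?_ ?_ h2
        · rintro _ ⟨r, hr, hrb, rfl⟩
          refine subset_span ⟨y :: r, List.pairwise_cons.mpr ⟨hrb, hr⟩, ?_, by simp⟩
          intro p hp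
          rcases List.mem_cons.mp hp with rfl | hp
          · exact hyc
          · exact (hrb p hp).trans hyc
        · simp [Submodule.zero_mem]
        · intro a b _ _ ha hb
          rw [mul_add]; exact add_mem ha hb
        · intro t a _ ha
          rw [mul_smul_comm]; exact smul_mem _ _ ha
      have h4 : (if y.1 = x.1 ∧ y.2 = x.2 + 1 then ((1 : 𝕂) - qd A x.1 ^ 2) • (1 : hA A) else 0)
          * P A s' ∈ SpS A c := by
        split
        · rw [smul_mul_assoc, one_mul]
          exact smul_mem _ _ (subset_span ⟨s', hs', fun p hp => (hys' p hp).trans hyc, rfl⟩)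
        · rw [zero_mul]; exact zero_mem _
      rw [h1]
      exact add_mem (smul_mem _ _ h3) h4

lemma sortSpan : ∀ (l : List (I × ℤ)) (c : ℤ), (∀ p ∈ l, p.2 ≤ c) → P A l ∈ SpS A c := by
  intro l
  induction l with
  | nil => exact fun c _ => subset_span ⟨[], List.Pairwise.nil, by simp, rfl⟩
  | cons x t IH =>
    intro c hl
    have hx : x.2 ≤ c := hl x (List.mem_cons_self)
    have ht : P A t ∈ SpS A c := IH c fun p hp => hl p (List.mem_cons_of_mem _ hp)
    rw [P_cons]
    refine Submodule.span_induction
      (p := fun z _ => ff A x.1 x.2 * z ∈ SpS A c) ?_ ?_ ?_ ?_ ht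
    · rintro _ ⟨r, hr, hrb, rfl⟩
      exact ins A x r hr c hx hrb
    · simp [Submodule.zero_mem]
    · intro a b _ _ ha hb
      rw [mul_add]; exact add_mem ha hb
    · intro t' a _ ha
      rw [mul_smul_comm]; exact smul_mem _ _ ha

/-- Sorted monomials. -/
def sortedSet : Set (hA A) := {z | ∃ l, Srt l ∧ z = P A l}

lemma exists_bound (l : List (I × ℤ)) : ∃ c : ℤ, ∀ p ∈ l, p.2 ≤ c := by
  induction l with
  | nil => exact ⟨0, by simp⟩
  | cons x t IH =>
    obtain ⟨c, hc⟩ := IH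
    refine ⟨max x.2 c, ?_⟩
    intro p hp
    rcases List.mem_cons.mp hp with rfl | hp
    · exact le_max_left _ _
    · exact (hc p hp).trans (le_max_right _ _)

lemma span_sorted_top : Submodule.span 𝕂 (sortedSet A) = ⊤ := by
  rw [eq_top_iff]
  rintro x -
  obtain ⟨y, rfl⟩ := RingQuot.mkAlgHom_surjective 𝕂 (hARel A) x
  have hall : RingQuot.mkAlgHom 𝕂 (hARel A) y ∈
      Submodule.span 𝕂 {z : hA A | ∃ l, z = P A l} := by
    induction y using FreeAlgebra.induction with
    | grade0 r =>
      rw [AlgHom.commutes, Algebra.algebraMap_eq_smul_one]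
      exact smul_mem _ _ (subset_span ⟨[], rfl⟩)
    | grade1 x =>
      exact subset_span ⟨[x], by simp [ff]⟩
    | mul a b ha hb =>
      rw [map_mul]
      have hle : Submodule.span 𝕂 {z : hA A | ∃ l, z = P A l} *
          Submodule.span 𝕂 {z : hA A | ∃ l, z = P A l} ≤
          Submodule.span 𝕂 {z : hA A | ∃ l, z = P A l} := by
        rw [Submodule.span_mul_span]
        refine Submodule.span_le.mpr ?_
        rintro _ ⟨_, ⟨l1, rfl⟩, _, ⟨l2, rfl⟩, rfl⟩
        exact subset_span ⟨l1 ++ l2, by simp⟩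
      exact hle (Submodule.mul_mem_mul ha hb)
    | add a b ha hb =>
      rw [map_add]; exact add_mem ha hb
  refine (Submodule.span_le.mpr ?_) hall
  rintro _ ⟨l, rfl⟩
  obtain ⟨c, hc⟩ := exists_bound l
  refine (Submodule.span_le.mpr ?_) (sortSpan A l c hc)
  rintro _ ⟨r, hr, _, rfl⟩
  exact subset_span ⟨r, hr, rfl⟩


variable {I : Type} [DecidableEq I] (A : GCM I)

lemma head_bound (x : I × ℤ) (l : List (I × ℤ)) (h : Srt (x :: l)) :
    ∀ p ∈ x :: l, p.2 ≤ x.2 := by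
  intro p hp
  rcases List.mem_cons.mp hp with rfl | hp
  · exact le_refl _
  · exact (List.pairwise_cons.mp h).1 p hp

lemma split_ge (d : ℤ) : ∀ l : List (I × ℤ), Srt l →
    ∃ u w, l = u ++ w ∧ (∀ p ∈ u, d ≤ p.2) ∧ (∀ p ∈ w, p.2 < d) := by
  intro l
  induction l with
  | nil => exact fun _ => ⟨[], [], rfl, by simp, by simp⟩
  | cons x t IH =>
    intro hl
    rcases le_or_gt d x.2 with h | h
    · obtain ⟨u, w, rfl, hu, hw⟩ := IH hl.tail
      refine ⟨x :: u, w, rfl, ?_, hw⟩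
      intro p hp
      rcases List.mem_cons.mp hp with rfl | hp
      · exact h
      · exact hu p hp
    · exact ⟨[], x :: t, rfl, by simp,
        fun p hp => lt_of_le_of_lt (head_bound x t hl p hp) h⟩

lemma split_top : ∀ l : List (I × ℤ), Srt l → l ≠ [] →
    ∃ (k : ℤ) (y v : List (I × ℤ)), l = y ++ v ∧ y ≠ [] ∧
      (∀ p ∈ y, p.2 = k) ∧ (∀ p ∈ v, p.2 < k) := by
  rintro (_ | ⟨x, t⟩) hl hne
  · exact absurd rfl hne
  · obtain ⟨u, w, he, hu, hw⟩ := split_ge x.2 (x :: t) hl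
    refine ⟨x.2, u, w, he, ?_, ?_, hw⟩
    · rintro rfl
      simp only [List.nil_append] at he
      subst he
      exact absurd (hw x (List.mem_cons_self)) (lt_irrefl _)
    · intro p hp
      have h1 : p ∈ x :: t := he ▸ List.mem_append_left _ hp
      exact le_antisymm (head_bound x t hl p h1) (hu p hp)

lemma mem_adjoin_of_all (s : Set (hA A)) :
    ∀ l : List (I × ℤ), (∀ p ∈ l, ff A p.1 p.2 ∈ s) → P A l ∈ Algebra.adjoin 𝕂 s := by
  intro l
  induction l with
  | nil => simpa using one_mem _
  | cons x t IH =>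
    intro h
    rw [P_cons]
    exact mul_mem (Algebra.subset_adjoin (h x (List.mem_cons_self)))
      (IH fun p hp => h p (List.mem_cons_of_mem _ hp))

lemma wt_apply (k : ℤ) (j₀ : I) : ∀ y : List (I × ℤ), (∀ p ∈ y, p.2 = k) →
    ∃ n : ℕ, ((y.map fun p => Finsupp.single p.1 (((p.2 + 1).negOnePow : ℤ))).sum) j₀ =
        ((k + 1).negOnePow : ℤ) * n ∧ ((∃ p ∈ y, p.1 = j₀) → 0 < n) := by
  intro y
  induction y with
  | nil => exact fun _ => ⟨0, by simp, by simp⟩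
  | cons x t IH =>
    intro h
    obtain ⟨n, hn, hpos⟩ := IH fun p hp => h p (List.mem_cons_of_mem _ hp)
    have hx : x.2 = k := h x (List.mem_cons_self)
    by_cases hj : x.1 = j₀
    · refine ⟨n + 1, ?_, fun _ => Nat.succ_pos n⟩
      rw [List.map_cons, List.sum_cons, Finsupp.add_apply, hn, hx, hj,
        Finsupp.single_apply, if_pos rfl]
      push_cast; ring
    · refine ⟨n, ?_, ?_⟩
      · rw [List.map_cons, List.sum_cons, Finsupp.add_apply, hn, hx,
          Finsupp.single_apply, if_neg hj, zero_add]
      · rintro ⟨p, hp, hpj⟩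
        rcases List.mem_cons.mp hp with rfl | hp
        · exact absurd hpj hj
        · exact hpos ⟨p, hp, hpj⟩

lemma M_sorted_zero (M : hA A →ₗ[𝕂] 𝕂)
    (hMzero : ∀ (m : ℤ) (β : I →₀ ℤ), β ≠ 0 → ∀ y, y ∈ hAk A m → y ∈ hAwt A β →
      ∀ u ∈ hAgt A m, ∀ v ∈ hAlt A m, M (u * y * v) = 0)
    (l : List (I × ℤ)) (hl : Srt l) (hne : l ≠ []) : M (P A l) = 0 := by
  obtain ⟨k, y, v, rfl, hy0, hyk, hvk⟩ := split_top l hl hne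
  set β : I →₀ ℤ := (y.map fun p => Finsupp.single p.1 (((p.2 + 1).negOnePow : ℤ))).sum with hβ
  obtain ⟨x, hx⟩ := List.exists_mem_of_ne_nil y hy0
  obtain ⟨n, hn, hpos⟩ := wt_apply k x.1 y hyk
  have hβne : β ≠ 0 := by
    intro h0
    have : β x.1 = 0 := by rw [h0]; rfl
    rw [hn] at this
    have hn0 : (n : ℤ) ≠ 0 := by
      have := hpos ⟨x, hx, rfl⟩
      omega
    exact (mul_ne_zero (Units.ne_zero _) hn0) this
  have hyk' : P A y ∈ hAk A k := by
    refine mem_adjoin_of_all A _ y ?_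
    intro p hp
    exact ⟨p.1, p.2, (hyk p hp).ge, (hyk p hp).le, rfl⟩
  have hywt : P A y ∈ hAwt A β := Submodule.subset_span ⟨y, rfl, rfl⟩
  have hv : P A v ∈ hAlt A k := by
    refine mem_adjoin_of_all A _ v ?_
    intro p hp
    exact ⟨p.1, p.2, by have := hvk p hp; omega, rfl⟩
  have := hMzero k β hβne (P A y) hyk' hywt 1 (one_mem _) (P A v) hv
  rw [one_mul] at this
  rw [P_append]
  exact this
lemma alg1 {R : Type} [Ring R] [Algebra 𝕂 R] (a fx pu : R) (κ μ' : 𝕂) (E : R) :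
    (κ • (fx * a) + E) * pu - (κ * μ') • ((fx * pu) * a) =
      κ • (fx * (a * pu - μ' • (pu * a))) + E * pu := by
  simp only [mul_sub, mul_smul_comm, smul_sub, smul_smul, add_mul, smul_mul_assoc, mul_assoc]
  abel

lemma alg2 {R : Type} [Ring R] [Algebra 𝕂 R] (c fx pw : R) (κ μ' : 𝕂) (E : R) :
    pw * (κ • (c * fx) + E) - (κ * μ') • (c * (pw * fx)) =
      κ • ((pw * c - μ' • (c * pw)) * fx) + pw * E := by
  simp only [mul_add, sub_mul, mul_smul_comm, smul_sub, smul_smul, smul_mul_assoc, mul_assoc]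
  abel

lemma moveL (i : I) (m : ℤ) : ∀ u : List (I × ℤ), (∀ p ∈ u, m ≤ p.2) →
    ∃ μ : 𝕂, ff A i (m-1) * P A u - μ • (P A u * ff A i (m-1)) ∈
      Submodule.span 𝕂 {z | ∃ v₁ v₂, u = v₁ ++ (i, m) :: v₂ ∧ z = P A (v₁ ++ v₂)} := by
  intro u
  induction u with
  | nil =>
    intro _
    refine ⟨1, ?_⟩
    simp only [P_nil, mul_one, one_mul, one_smul, sub_self]
    exact zero_mem _
  | cons x u' IH =>
    intro hu
    have hx : m - 1 < x.2 := by have := hu x (List.mem_cons_self); omega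
    obtain ⟨μ', hs⟩ := IH fun p hp => hu p (List.mem_cons_of_mem _ hp)
    set κ : 𝕂 := qh ^ (((x.2 - (m-1) + 1).negOnePow : ℤ) * (A.d i * A.c i x.1)) with hκ
    refine ⟨κ * μ', ?_⟩
    have hrel := comm_rel A i x.1 (m-1) x.2 hx
    have hid : ff A i (m-1) * P A (x :: u') - (κ * μ') • (P A (x :: u') * ff A i (m-1)) =
        κ • (ff A x.1 x.2 * (ff A i (m-1) * P A u' - μ' • (P A u' * ff A i (m-1))))
        + (if x.1 = i ∧ x.2 = (m-1) + 1 then ((1 : 𝕂) - qd A i ^ 2) • (1 : hA A) else 0)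
            * P A u' := by
      rw [P_cons, ← mul_assoc, hrel, ← hκ]
      exact alg1 _ _ _ _ _ _
    rw [hid]
    refine add_mem (smul_mem _ _ ?_) ?_
    · refine Submodule.span_induction
        (p := fun z _ => ff A x.1 x.2 * z ∈ Submodule.span 𝕂
          {z | ∃ v₁ v₂, x :: u' = v₁ ++ (i, m) :: v₂ ∧ z = P A (v₁ ++ v₂)}) ?_ ?_ ?_ ?_ hs
      · rintro _ ⟨v₁, v₂, huv, rfl⟩
        refine Submodule.subset_span ⟨x :: v₁, v₂, by rw [huv]; rfl, by simp⟩
      · simp [Submodule.zero_mem]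
      · intro a b _ _ ha hb
        rw [mul_add]; exact add_mem ha hb
      · intro t a _ ha
        rw [mul_smul_comm]; exact Submodule.smul_mem _ _ ha
    · split
      · next hcond =>
        have hxe : x = (i, m) := Prod.ext hcond.1 (by omega)
        rw [smul_mul_assoc, one_mul]
        exact Submodule.smul_mem _ _
          (Submodule.subset_span ⟨[], u', by rw [hxe]; rfl, by simp⟩)
      · rw [zero_mul]; exact zero_mem _

lemma moveR (i : I) (m : ℤ) : ∀ w : List (I × ℤ), (∀ p ∈ w, p.2 ≤ m) →
    ∃ μ : 𝕂, P A w * ff A i (m+1) - μ • (ff A i (m+1) * P A w) ∈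
      Submodule.span 𝕂 {z | ∃ v₁ v₂, w = v₁ ++ (i, m) :: v₂ ∧ z = P A (v₁ ++ v₂)} := by
  intro w
  induction w using List.reverseRecOn with
  | nil =>
    intro _
    refine ⟨1, ?_⟩
    simp only [P_nil, mul_one, one_mul, one_smul, sub_self]
    exact zero_mem _
  | append_singleton w' x IH =>
    intro hw
    have hx : x.2 < m + 1 := by
      have := hw x (by simp)
      omega
    obtain ⟨μ', hs⟩ := IH fun p hp => hw p (by simp [hp])
    set κ : 𝕂 := qh ^ ((((m+1) - x.2 + 1).negOnePow : ℤ) * (A.d x.1 * A.c x.1 i)) with hκ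
    refine ⟨κ * μ', ?_⟩
    have hrel := comm_rel A x.1 i x.2 (m+1) hx
    have hid : P A (w' ++ [x]) * ff A i (m+1) - (κ * μ') • (ff A i (m+1) * P A (w' ++ [x])) =
        κ • ((P A w' * ff A i (m+1) - μ' • (ff A i (m+1) * P A w')) * ff A x.1 x.2)
        + P A w' * (if i = x.1 ∧ m + 1 = x.2 + 1 then ((1 : 𝕂) - qd A x.1 ^ 2) • (1 : hA A) else 0) := by
      rw [P_append, P_singleton, mul_assoc, hrel, ← hκ]
      exact alg2 _ _ _ _ _ _
    rw [hid]
    refine add_mem (smul_mem _ _ ?_) ?_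
    · refine Submodule.span_induction
        (p := fun z _ => z * ff A x.1 x.2 ∈ Submodule.span 𝕂
          {z | ∃ v₁ v₂, w' ++ [x] = v₁ ++ (i, m) :: v₂ ∧ z = P A (v₁ ++ v₂)}) ?_ ?_ ?_ ?_ hs
      · rintro _ ⟨v₁, v₂, huv, rfl⟩
        refine Submodule.subset_span ⟨v₁, v₂ ++ [x], by rw [huv]; simp, by simp [mul_assoc]⟩
      · simp [Submodule.zero_mem]
      · intro a b _ _ ha hb
        rw [add_mul]; exact add_mem ha hb
      · intro t a _ ha
        rw [smul_mul_assoc]; exact Submodule.smul_mem _ _ ha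
    · split
      · next hcond =>
        have hxe : x = (i, m) := Prod.ext hcond.1.symm (by omega)
        rw [mul_smul_comm, mul_one]
        exact Submodule.smul_mem _ _
          (Submodule.subset_span ⟨w', [], by rw [hxe], by simp⟩)
      · rw [mul_zero]; exact zero_mem _
lemma Mleft_zero (M : hA A →ₗ[𝕂] 𝕂)
    (hMzero : ∀ (m : ℤ) (β : I →₀ ℤ), β ≠ 0 → ∀ y, y ∈ hAk A m → y ∈ hAwt A β →
      ∀ u ∈ hAgt A m, ∀ v ∈ hAlt A m, M (u * y * v) = 0)
    (i : I) (m : ℤ) (l : List (I × ℤ)) (hl : Srt l) (hne : l ≠ [(i, m)]) :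
    M (ff A i (m-1) * P A l) = 0 := by
  obtain ⟨u, w, rfl, hu, hw⟩ := split_ge m l hl
  obtain ⟨hlu, hlw, hcross⟩ := List.pairwise_append.mp hl
  obtain ⟨μ, hs⟩ := moveL A i m u hu
  have hsrt1 : Srt (u ++ (i, m-1) :: w) := by
    refine List.pairwise_append.mpr ⟨hlu, List.pairwise_cons.mpr ⟨?_, hlw⟩, ?_⟩
    · intro p hp; have := hw p hp; omega
    · intro a ha b hb
      rcases List.mem_cons.mp hb with rfl | hb
      · have := hu a ha; simp; omega
      · exact hcross a ha b hb
  have key : M (P A u * ff A i (m-1) * P A w) = 0 := by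
    have h0 := M_sorted_zero A M hMzero _ hsrt1 (by simp)
    simpa [mul_assoc] using h0
  have h2 : M ((ff A i (m-1) * P A u - μ • (P A u * ff A i (m-1))) * P A w) = 0 := by
    refine Submodule.span_induction (p := fun z _ => M (z * P A w) = 0) ?_ ?_ ?_ ?_ hs
    · rintro _ ⟨v₁, v₂, hueq, rfl⟩
      have hsub : Srt ((v₁ ++ v₂) ++ w) := by
        refine List.Pairwise.sublist ?_ hl
        rw [hueq]
        exact ((List.sublist_cons_self _ _).append_left v₁).append_right w
      have hnil : (v₁ ++ v₂) ++ w ≠ [] := by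
        intro h0
        rcases List.append_eq_nil_iff.mp h0 with ⟨h1, h2⟩
        rcases List.append_eq_nil_iff.mp h1 with ⟨h3, h4⟩
        apply hne
        simp [hueq, h2, h3, h4]
      have h0 := M_sorted_zero A M hMzero _ hsub hnil
      simpa [mul_assoc] using h0
    · simp
    · intro a b _ _ ha hb
      rw [add_mul, map_add, ha, hb, add_zero]
    · intro t a _ ha
      rw [smul_mul_assoc, map_smul, ha, smul_zero]
  have e : ff A i (m-1) * P A (u ++ w) =
      μ • (P A u * ff A i (m-1) * P A w)
      + (ff A i (m-1) * P A u - μ • (P A u * ff A i (m-1))) * P A w := by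
    rw [P_append]
    simp only [sub_mul, smul_mul_assoc, mul_assoc]
    abel
  rw [e, map_add, map_smul, key, h2, smul_zero, add_zero]

lemma Mright_zero (M : hA A →ₗ[𝕂] 𝕂)
    (hMzero : ∀ (m : ℤ) (β : I →₀ ℤ), β ≠ 0 → ∀ y, y ∈ hAk A m → y ∈ hAwt A β →
      ∀ u ∈ hAgt A m, ∀ v ∈ hAlt A m, M (u * y * v) = 0)
    (i : I) (m : ℤ) (l : List (I × ℤ)) (hl : Srt l) (hne : l ≠ [(i, m)]) :
    M (P A l * ff A i (m+1)) = 0 := by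
  obtain ⟨u, w, rfl, hu, hw⟩ := split_ge (m+1) l hl
  obtain ⟨hlu, hlw, hcross⟩ := List.pairwise_append.mp hl
  obtain ⟨μ, hs⟩ := moveR A i m w (fun p hp => by have := hw p hp; omega)
  have hsrt1 : Srt (u ++ (i, m+1) :: w) := by
    refine List.pairwise_append.mpr ⟨hlu, List.pairwise_cons.mpr ⟨?_, hlw⟩, ?_⟩
    · intro p hp; have := hw p hp; simp; omega
    · intro a ha b hb
      rcases List.mem_cons.mp hb with rfl | hb
      · have := hu a ha; simp; omega
      · exact hcross a ha b hb
  have key : M (P A u * (ff A i (m+1) * P A w)) = 0 := by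
    have h0 := M_sorted_zero A M hMzero _ hsrt1 (by simp)
    simpa [mul_assoc] using h0
  have h2 : M (P A u * (P A w * ff A i (m+1) - μ • (ff A i (m+1) * P A w))) = 0 := by
    refine Submodule.span_induction (p := fun z _ => M (P A u * z) = 0) ?_ ?_ ?_ ?_ hs
    · rintro _ ⟨v₁, v₂, hweq, rfl⟩
      have hsub : Srt (u ++ (v₁ ++ v₂)) := by
        refine List.Pairwise.sublist ?_ hl
        rw [hweq]
        exact ((List.sublist_cons_self _ _).append_left v₁).append_left u
      have hnil : u ++ (v₁ ++ v₂) ≠ [] := by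
        intro h0
        rcases List.append_eq_nil_iff.mp h0 with ⟨h1, h2⟩
        rcases List.append_eq_nil_iff.mp h2 with ⟨h3, h4⟩
        apply hne
        simp [hweq, h1, h3, h4]
      have h0 := M_sorted_zero A M hMzero _ hsub hnil
      simpa [mul_assoc] using h0
    · simp
    · intro a b _ _ ha hb
      rw [mul_add, map_add, ha, hb, add_zero]
    · intro t a _ ha
      rw [mul_smul_comm, map_smul, ha, smul_zero]
  have e : P A (u ++ w) * ff A i (m+1) =
      μ • (P A u * (ff A i (m+1) * P A w))
      + P A u * (P A w * ff A i (m+1) - μ • (ff A i (m+1) * P A w)) := by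
    rw [P_append]
    simp only [mul_sub, mul_smul_comm, mul_assoc]
    abel
  rw [e, map_add, map_smul, key, h2, smul_zero, add_zero]

lemma Mbase_left (M : hA A →ₗ[𝕂] 𝕂) (hMone : M 1 = 1)
    (hMzero : ∀ (m : ℤ) (β : I →₀ ℤ), β ≠ 0 → ∀ y, y ∈ hAk A m → y ∈ hAwt A β →
      ∀ u ∈ hAgt A m, ∀ v ∈ hAlt A m, M (u * y * v) = 0)
    (i : I) (m : ℤ) : M (ff A i (m-1) * ff A i m) = (1 : 𝕂) - qd A i ^ 2 := by
  have hrel := comm_rel A i i (m-1) m (by omega)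
  rw [if_pos ⟨rfl, by omega⟩] at hrel
  have hba : M (ff A i m * ff A i (m-1)) = 0 := by
    have h0 := M_sorted_zero A M hMzero [(i, m), (i, m-1)]
      (List.pairwise_cons.mpr ⟨by simp, List.pairwise_singleton _ _⟩) (by simp)
    simpa using h0
  rw [hrel, map_add, map_smul, map_smul, hba, hMone]
  simp

lemma Mbase_right (M : hA A →ₗ[𝕂] 𝕂) (hMone : M 1 = 1)
    (hMzero : ∀ (m : ℤ) (β : I →₀ ℤ), β ≠ 0 → ∀ y, y ∈ hAk A m → y ∈ hAwt A β →
      ∀ u ∈ hAgt A m, ∀ v ∈ hAlt A m, M (u * y * v) = 0)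
    (i : I) (m : ℤ) : M (ff A i m * ff A i (m+1)) = (1 : 𝕂) - qd A i ^ 2 := by
  have hrel := comm_rel A i i m (m+1) (by omega)
  rw [if_pos ⟨rfl, rfl⟩] at hrel
  have hba : M (ff A i (m+1) * ff A i m) = 0 := by
    have h0 := M_sorted_zero A M hMzero [(i, m+1), (i, m)]
      (List.pairwise_cons.mpr ⟨by simp, List.pairwise_singleton _ _⟩) (by simp)
    simpa using h0
  rw [hrel, map_add, map_smul, map_smul, hba, hMone]
  simp
/-- `M(f_{i,m-1} x) = M(x f_{i,m+1})` for all `x ∈ Â`, `i ∈ I`, `m ∈ ℤ`.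
The projection `M : Â → ℚ(q^{1/2})` onto the component of the identity in the
weight-product decomposition of `Â` is characterized by: `M(1) = 1` and `M` kills every
product `u y v` with `u ∈ Â_{>m}`, `v ∈ Â_{<m}` and `y ∈ Â[m]` homogeneous of nonzero
weight. -/
theorem statement8 (A : GCM I)
    (M : hA A →ₗ[𝕂] 𝕂)
    (hMone : M 1 = 1)
    (hMzero : ∀ (m : ℤ) (β : I →₀ ℤ), β ≠ 0 → ∀ y, y ∈ hAk A m → y ∈ hAwt A β →
      ∀ u ∈ hAgt A m, ∀ v ∈ hAlt A m, M (u * y * v) = 0) :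
    ∀ (x : hA A) (i : I) (m : ℤ),
      M (ff A i (m - 1) * x) = M (x * ff A i (m + 1)) := by
  intro x i m
  have hx : x ∈ Submodule.span 𝕂 (sortedSet A) := by
    rw [span_sorted_top]; trivial
  refine Submodule.span_induction
    (p := fun z _ => M (ff A i (m - 1) * z) = M (z * ff A i (m + 1))) ?_ ?_ ?_ ?_ hx
  · rintro _ ⟨l, hl, rfl⟩
    by_cases hcase : l = [(i, m)]
    · subst hcase
      rw [P_singleton]
      rw [Mbase_left A M hMone hMzero i m, Mbase_right A M hMone hMzero i m]
    · rw [Mleft_zero A M hMzero i m l hl hcase, Mright_zero A M hMzero i m l hl hcase]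
  · simp
  · intro a b _ _ ha hb
    rw [mul_add, add_mul, map_add, map_add, ha, hb]
  · intro t a _ ha
    rw [mul_smul_comm, smul_mul_assoc, map_smul, map_smul, ha]

end
end

section
/- For any homogeneous u ∈ U_q^-(g) one has E_{i,m}(L_m(u)) = q_i^{−⟨h_i, wt(u)⟩ − 2} ζ_i L_m(e_i'(u)) and E*_{i,m}(L_m(u)) = q_i^{−⟨h_i, wt(u)⟩ − 2} ζ_i L_m(e_i^*(u)); in particular the operators E_{i,m} and E*_{i,m} preserve the subalgebra Â[m]. -/
/- Common setting: a symmetrizable generalized Cartan matrix, the field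
`𝕂 = ℚ(q^{1/2})` (with `sqv = q^{1/2}` and `q = qh = sqv²`), quantum integers, the bosonic
extension `hA A` presented by the `q`-Serre relations and the bosonic commutation
relations, its weight spaces and distinguished subalgebras, and the root-lattice
pairing. -/

set_option maxHeartbeats 1000000
set_option synthInstance.maxHeartbeats 400000

noncomputable section

variable {I : Type} [DecidableEq I]

/-- The `q`-Serre relations for `U_q^-(g)` (with scalars extended to `ℚ(q^{1/2})`). -/
inductive URel (A : GCM I) : FreeAlgebra 𝕂 I → FreeAlgebra 𝕂 I → Prop
  | serre (i j : I) (h : i ≠ j) :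
      URel A (serreIn A i j (FreeAlgebra.ι 𝕂 i) (FreeAlgebra.ι 𝕂 j)) 0

/-- `ℚ(q^{1/2}) ⊗_{ℚ(q)} U_q^-(g)`. -/
abbrev Uq (A : GCM I) : Type := RingQuot (URel A)

/-- The generator `f_i` of `U_q^-(g)`. -/
def fg (A : GCM I) (i : I) : Uq A :=
  RingQuot.mkAlgHom 𝕂 (URel A) (FreeAlgebra.ι 𝕂 i)

/-- The weight space of weight `β` of `U_q^-(g)`, where `wt (f_i) = -α_i`. -/
def Uwt (A : GCM I) (β : I →₀ ℤ) : Submodule 𝕂 (Uq A) :=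
  Submodule.span 𝕂 {x | ∃ l : List I,
    -((l.map fun i => Finsupp.single i (1 : ℤ)).sum) = β ∧ x = (l.map (fg A)).prod}

/-- `E_{i,m}(x) = [x, f_{i,m+1}]_q` for homogeneous `x` of weight `β`
(note `wt (f_{i,m+1}) = α_{i,m}`). -/
def Ebr (A : GCM I) (i : I) (m : ℤ) (β : I →₀ ℤ) (x : hA A) : hA A :=
  x * ff A i (m + 1) - qh ^ (-(ip A β (aim i m))) • (ff A i (m + 1) * x)

/-- `E*_{i,m}(x) = [f_{i,m-1}, x]_q` for homogeneous `x` of weight `β`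
(note `wt (f_{i,m-1}) = α_{i,m}`). -/
def Esbr (A : GCM I) (i : I) (m : ℤ) (β : I →₀ ℤ) (x : hA A) : hA A :=
  ff A i (m - 1) * x - qh ^ (-(ip A (aim i m) β)) • (x * ff A i (m - 1))

/-- `⟨h_i, β⟩ = Σ_j c_{ij} β_j`. -/
def hp (A : GCM I) (i : I) (β : I →₀ ℤ) : ℤ := β.sum fun j b => A.c i j * b

section helpers
set_option linter.unusedSectionVars false
variable {I : Type} [DecidableEq I]

lemma qh_ne_zero : (qh : 𝕂) ≠ 0 := pow_ne_zero _ RatFunc.X_ne_zero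

lemma ip_inner_zero (A : GCM I) (γ : I →₀ ℤ) (i : I) :
    (γ.sum fun j b => (0:ℤ) * b * (A.d i * A.c i j)) = 0 := by simp [Finsupp.sum]

lemma ip_zero_left (A : GCM I) (γ : I →₀ ℤ) : ip A 0 γ = 0 := by
  simp [ip, Finsupp.sum_zero_index]

lemma ip_add_left (A : GCM I) (β β' γ : I →₀ ℤ) :
    ip A (β + β') γ = ip A β γ + ip A β' γ := by
  unfold ip
  rw [Finsupp.sum_add_index' (fun a => ip_inner_zero A γ a)]
  intro a b₁ b₂
  rw [← Finsupp.sum_add]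
  exact Finsupp.sum_congr fun j _ => by ring

lemma ip_neg_left (A : GCM I) (β γ : I →₀ ℤ) : ip A (-β) γ = - ip A β γ := by
  have h := ip_add_left A β (-β) γ
  simp only [add_neg_cancel, ip_zero_left] at h
  linarith

lemma ip_smul_left (A : GCM I) (c : ℤ) (β γ : I →₀ ℤ) :
    ip A (c • β) γ = c * ip A β γ := by
  unfold ip
  rw [Finsupp.sum_smul_index' (fun a => ip_inner_zero A γ a), Finsupp.mul_sum]
  refine Finsupp.sum_congr fun j _ => ?_
  rw [Finsupp.mul_sum]
  refine Finsupp.sum_congr fun j' _ => ?_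
  simp only [smul_eq_mul]; ring

lemma ip_single_right (A : GCM I) (β : I →₀ ℤ) (j : I) (b : ℤ) :
    ip A β (Finsupp.single j b) = b * β.sum fun i a => a * (A.d i * A.c i j) := by
  unfold ip
  rw [Finsupp.mul_sum]
  refine Finsupp.sum_congr fun i _ => ?_
  rw [Finsupp.sum_single_index (by ring)]
  ring

lemma ip_symm (A : GCM I) (β γ : I →₀ ℤ) : ip A β γ = ip A γ β := by
  unfold ip
  rw [Finsupp.sum_comm]
  refine Finsupp.sum_congr fun j _ => Finsupp.sum_congr fun i _ => ?_
  rw [A.dsymm]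
  ring

lemma hp_zero (A : GCM I) (i : I) : hp A i 0 = 0 := by simp [hp, Finsupp.sum_zero_index]

lemma hp_add (A : GCM I) (i : I) (β β' : I →₀ ℤ) :
    hp A i (β + β') = hp A i β + hp A i β' := by
  unfold hp
  rw [Finsupp.sum_add_index' (fun a => by ring)]
  intro a b₁ b₂; ring

lemma hp_neg (A : GCM I) (i : I) (β : I →₀ ℤ) : hp A i (-β) = - hp A i β := by
  have h := hp_add A i β (-β)
  simp only [add_neg_cancel, hp_zero] at h
  linarith

lemma hp_single (A : GCM I) (i j : I) (b : ℤ) :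
    hp A i (Finsupp.single j b) = A.c i j * b := by
  simp [hp, Finsupp.sum_single_index]

/-- The sum `Σ_{j ∈ l} (α_i, α_j)`. -/
def Sl (A : GCM I) (i : I) (l : List I) : ℤ := A.d i * (l.map (A.c i)).sum

lemma Sl_nil (A : GCM I) (i : I) : Sl A i [] = 0 := by simp [Sl]

lemma Sl_cons (A : GCM I) (i j : I) (l : List I) :
    Sl A i (j :: l) = A.d i * A.c i j + Sl A i l := by simp [Sl, mul_add]

lemma Sl_append (A : GCM I) (i j : I) (l : List I) :
    Sl A i (l ++ [j]) = Sl A i l + A.d i * A.c i j := by simp [Sl, mul_add]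

/-- `β_l = Σ_{j ∈ l} α_j`. -/
def bl (l : List I) : I →₀ ℤ := (l.map fun j => Finsupp.single j (1:ℤ)).sum

lemma ip_bl (A : GCM I) (i : I) (l : List I) :
    ip A (bl l) (Finsupp.single i 1) = Sl A i l := by
  induction l with
  | nil => simp [bl, ip_zero_left, Sl_nil]
  | cons j l ih =>
    have hb : bl (j :: l) = Finsupp.single j 1 + bl l := by simp [bl]
    rw [hb, ip_add_left, ih, Sl_cons, ip_single_right]
    rw [Finsupp.sum_single_index (by ring)]
    rw [A.dsymm j i]
    ring

lemma hp_bl (A : GCM I) (i : I) (l : List I) :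
    A.d i * hp A i (bl l) = Sl A i l := by
  induction l with
  | nil => simp [bl, hp_zero, Sl_nil]
  | cons j l ih =>
    have hb : bl (j :: l) = Finsupp.single j 1 + bl l := by simp [bl]
    rw [hb, hp_add, hp_single, Sl_cons, mul_add, ih]
    ring

lemma negOnePow_sq (m : ℤ) : (m.negOnePow : ℤ) * (m.negOnePow : ℤ) = 1 := by
  rcases Int.even_or_odd m with h | h
  · simp [Int.negOnePow_even _ h]
  · simp [Int.negOnePow_odd _ h]

lemma ip_mon_E (A : GCM I) (i : I) (m : ℤ) (l : List I) :
    -(ip A ((m.negOnePow : ℤ) • (-(bl l))) (aim i m)) = Sl A i l := by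
  have h1 : ip A (bl l) (Finsupp.single i ((m.negOnePow : ℤ))) =
      (m.negOnePow : ℤ) * Sl A i l := by
    rw [ip_single_right, ← ip_bl A i l, ip_single_right]
    ring
  show -(ip A ((m.negOnePow : ℤ) • (-(bl l))) (Finsupp.single i ((m.negOnePow : ℤ)))) = _
  rw [ip_smul_left, ip_neg_left, h1]
  have h2 : -((m.negOnePow : ℤ) * -((m.negOnePow : ℤ) * Sl A i l)) =
      ((m.negOnePow : ℤ) * (m.negOnePow : ℤ)) * Sl A i l := by ring
  rw [h2, negOnePow_sq, one_mul]

lemma ip_mon_Es (A : GCM I) (i : I) (m : ℤ) (l : List I) :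
    -(ip A (aim i m) ((m.negOnePow : ℤ) • (-(bl l)))) = Sl A i l := by
  rw [ip_symm]
  exact ip_mon_E A i m l

lemma exp_mon (A : GCM I) (i : I) (l : List I) :
    A.d i * (-(hp A i (-(bl l))) - 2) = Sl A i l - 2 * A.d i := by
  rw [hp_neg, neg_neg, mul_sub, hp_bl]
  ring

end helpers
section rels
set_option linter.unusedSectionVars false
variable {I : Type} [DecidableEq I]

lemma ff_comm (A : GCM I) (i j : I) (m p : ℤ) (h : m < p) :
    ff A i m * ff A j p =
      qh ^ (((p - m + 1).negOnePow : ℤ) * (A.d i * A.c i j)) • (ff A j p * ff A i m)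
        + (if j = i ∧ p = m + 1 then ((1 : 𝕂) - qd A i ^ 2) • (1 : hA A) else 0) := by
  have h1 := RingQuot.mkAlgHom_rel 𝕂 (hARel.comm (A := A) i j m p h)
  rw [map_mul, map_add, map_smul, map_mul] at h1
  rw [apply_ite (RingQuot.mkAlgHom 𝕂 (hARel A)), map_smul, map_one, map_zero] at h1
  exact h1

lemma ite_zi (A : GCM I) (i j : I) (h : ∀ (_ : i = j), qd A j = qd A i) :
    (if i = j then ((1 : 𝕂) - qd A j ^ 2) • (1 : hA A) else 0)
      = (if i = j then zi A i • (1 : hA A) else 0) := by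
  by_cases hij : i = j
  · subst hij; simp [zi]
  · simp [hij]

lemma relE (A : GCM I) (i j : I) (m : ℤ) :
    ff A j m * ff A i (m + 1) =
      qh ^ (A.d i * A.c i j) • (ff A i (m + 1) * ff A j m)
        + (if i = j then zi A i • (1 : hA A) else 0) := by
  have h := ff_comm A j i m (m + 1) (lt_add_one m)
  have h2 : (m + 1 - m + 1 : ℤ) = 2 := by ring
  rw [h2] at h
  have h3 : ((2 : ℤ).negOnePow : ℤ) = 1 := by
    simp [Int.negOnePow_even 2 ⟨1, rfl⟩]
  rw [h3, one_mul, A.dsymm j i] at h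
  have h4 : (if i = j ∧ (m + 1 : ℤ) = m + 1 then ((1 : 𝕂) - qd A j ^ 2) • (1 : hA A) else 0)
      = (if i = j then zi A i • (1 : hA A) else 0) := by
    by_cases hij : i = j
    · subst hij; rw [if_pos ⟨rfl, rfl⟩, if_pos rfl]; rfl
    · rw [if_neg (by tauto), if_neg hij]
  rw [h4] at h
  exact h

lemma relEs (A : GCM I) (i j : I) (m : ℤ) :
    ff A i (m - 1) * ff A j m =
      qh ^ (A.d i * A.c i j) • (ff A j m * ff A i (m - 1))
        + (if i = j then zi A i • (1 : hA A) else 0) := by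
  have h := ff_comm A i j (m - 1) m (by omega)
  have h2 : (m - (m - 1) + 1 : ℤ) = 2 := by ring
  rw [h2] at h
  have h3 : ((2 : ℤ).negOnePow : ℤ) = 1 := by
    simp [Int.negOnePow_even 2 ⟨1, rfl⟩]
  rw [h3, one_mul] at h
  have h4 : (if j = i ∧ m = m - 1 + 1 then ((1 : 𝕂) - qd A i ^ 2) • (1 : hA A) else 0)
      = (if i = j then zi A i • (1 : hA A) else 0) := by
    by_cases hij : i = j
    · subst hij; rw [if_pos ⟨rfl, by omega⟩, if_pos rfl]; rfl
    · rw [if_neg (by tauto), if_neg hij]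
  rw [h4] at h
  exact h

lemma absE {R : Type} [Ring R] [Algebra 𝕂 R] (f g y E e : R) (s a c' : 𝕂)
    (h1 : y * f = s • (f * y) + c' • E) (h2 : g * f = a • (f * g) + e) :
    g * y * f - (s * a) • (f * (g * y)) = s • (e * y) + c' • (g * E) := by
  have h3 : g * y * f = g * (y * f) := by rw [mul_assoc]
  rw [h3, h1, mul_add, mul_smul_comm, mul_smul_comm, ← mul_assoc, h2, add_mul,
    smul_mul_assoc, smul_add, smul_smul, mul_comm s a, ← smul_smul]
  rw [smul_smul, mul_assoc f g y]
  abel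

lemma absEs {R : Type} [Ring R] [Algebra 𝕂 R] (f g y E e : R) (s a c' : 𝕂)
    (h1 : f * y = s • (y * f) + c' • E) (h2 : f * g = a • (g * f) + e) :
    f * (y * g) - (s * a) • (y * g * f) = s • (y * e) + c' • (E * g) := by
  have h3 : f * (y * g) = (f * y) * g := by rw [mul_assoc]
  rw [h3, h1, add_mul, smul_mul_assoc, mul_assoc, h2, mul_add, mul_smul_comm, smul_add,
    smul_smul, mul_comm s a, ← smul_smul]
  rw [smul_smul, ← mul_assoc y g f, smul_mul_assoc]
  abel
end rels
section key
set_option linter.unusedSectionVars false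
variable {I : Type} [DecidableEq I]

lemma keyE (A : GCM I) (e' : I → Module.End 𝕂 (Uq A))
    (he'one : ∀ i, e' i 1 = 0)
    (he'f : ∀ i j u, e' i (fg A j * u) =
      (if i = j then u else 0) + qh ^ (-(A.d i * A.c i j)) • (fg A j * e' i u))
    (m : ℤ) (Lm : Uq A →ₐ[𝕂] hA A) (hLm : ∀ i, Lm (fg A i) = ff A i m)
    (i : I) (l : List I) :
    Lm ((l.map (fg A)).prod) * ff A i (m + 1)
        - qh ^ (Sl A i l) • (ff A i (m + 1) * Lm ((l.map (fg A)).prod))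
      = (qh ^ (Sl A i l - 2 * A.d i) * zi A i) • Lm (e' i ((l.map (fg A)).prod)) := by
  induction l with
  | nil => simp [Sl_nil, he'one]
  | cons j l ih =>
    have hprod : (((j :: l).map (fg A)).prod : Uq A) = fg A j * (l.map (fg A)).prod := by
      simp
    rw [hprod, map_mul, hLm j, he'f i j, map_add, map_smul, map_mul, hLm j, Sl_cons]
    rw [apply_ite Lm, map_zero]
    have habs := absE (ff A i (m + 1)) (ff A j m) (Lm ((l.map (fg A)).prod))
      (Lm (e' i ((l.map (fg A)).prod))) (if i = j then zi A i • (1 : hA A) else 0)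
      (qh ^ (Sl A i l)) (qh ^ (A.d i * A.c i j)) (qh ^ (Sl A i l - 2 * A.d i) * zi A i)
      (sub_eq_iff_eq_add'.mp ih) (relE A i j m)
    rw [← zpow_add₀ qh_ne_zero] at habs
    rw [show Sl A i l + A.d i * A.c i j = A.d i * A.c i j + Sl A i l from by ring] at habs
    rw [habs, smul_add, smul_smul]
    have hsc : qh ^ (A.d i * A.c i j + Sl A i l - 2 * A.d i) * zi A i * qh ^ (-(A.d i * A.c i j))
        = qh ^ (Sl A i l - 2 * A.d i) * zi A i := by
      rw [mul_right_comm, ← zpow_add₀ qh_ne_zero,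
        show A.d i * A.c i j + Sl A i l - 2 * A.d i + -(A.d i * A.c i j)
          = Sl A i l - 2 * A.d i from by ring]
    rw [hsc]
    congr 1
    by_cases hij : i = j
    · subst hij
      rw [if_pos rfl, if_pos rfl, smul_mul_assoc, one_mul, smul_smul,
        show A.d i * A.c i i + Sl A i l - 2 * A.d i = Sl A i l from by rw [A.diag]; ring]
    · rw [if_neg hij, if_neg hij, zero_mul, smul_zero, smul_zero]
end key
section key2
set_option linter.unusedSectionVars false
variable {I : Type} [DecidableEq I]

lemma keyEs (A : GCM I) (es : I → Module.End 𝕂 (Uq A))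
    (hesone : ∀ i, es i 1 = 0)
    (hesf : ∀ i j u, es i (u * fg A j) =
      (if i = j then u else 0) + qh ^ (-(A.d i * A.c i j)) • (es i u * fg A j))
    (m : ℤ) (Lm : Uq A →ₐ[𝕂] hA A) (hLm : ∀ i, Lm (fg A i) = ff A i m)
    (i : I) (l : List I) :
    ff A i (m - 1) * Lm ((l.map (fg A)).prod)
        - qh ^ (Sl A i l) • (Lm ((l.map (fg A)).prod) * ff A i (m - 1))
      = (qh ^ (Sl A i l - 2 * A.d i) * zi A i) • Lm (es i ((l.map (fg A)).prod)) := by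
  induction l using List.reverseRecOn with
  | nil => simp [Sl_nil, hesone]
  | append_singleton l j ih =>
    have hprod : (((l ++ [j]).map (fg A)).prod : Uq A) = (l.map (fg A)).prod * fg A j := by
      simp
    rw [hprod, map_mul, hLm j, hesf i, map_add, map_smul, map_mul, hLm j, Sl_append]
    rw [apply_ite Lm, map_zero]
    have habs := absEs (ff A i (m - 1)) (ff A j m) (Lm ((l.map (fg A)).prod))
      (Lm (es i ((l.map (fg A)).prod))) (if i = j then zi A i • (1 : hA A) else 0)
      (qh ^ (Sl A i l)) (qh ^ (A.d i * A.c i j)) (qh ^ (Sl A i l - 2 * A.d i) * zi A i)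
      (sub_eq_iff_eq_add'.mp ih) (relEs A i j m)
    rw [← zpow_add₀ qh_ne_zero] at habs
    rw [habs, smul_add, smul_smul]
    have hsc : qh ^ (Sl A i l + A.d i * A.c i j - 2 * A.d i) * zi A i * qh ^ (-(A.d i * A.c i j))
        = qh ^ (Sl A i l - 2 * A.d i) * zi A i := by
      rw [mul_right_comm, ← zpow_add₀ qh_ne_zero,
        show Sl A i l + A.d i * A.c i j - 2 * A.d i + -(A.d i * A.c i j)
          = Sl A i l - 2 * A.d i from by ring]
    rw [hsc]
    congr 1
    by_cases hij : i = j
    · subst hij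
      rw [if_pos rfl, if_pos rfl, mul_smul_comm, mul_one, smul_smul,
        show Sl A i l + A.d i * A.c i i - 2 * A.d i = Sl A i l from by rw [A.diag]; ring]
    · rw [if_neg hij, if_neg hij, mul_zero, smul_zero, smul_zero]
end key2
section part1
set_option linter.unusedSectionVars false
variable {I : Type} [DecidableEq I]

lemma part1 (A : GCM I) (e' es : I → Module.End 𝕂 (Uq A))
    (he'one : ∀ i, e' i 1 = 0)
    (he'f : ∀ i j u, e' i (fg A j * u) =
      (if i = j then u else 0) + qh ^ (-(A.d i * A.c i j)) • (fg A j * e' i u))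
    (hesone : ∀ i, es i 1 = 0)
    (hesf : ∀ i j u, es i (u * fg A j) =
      (if i = j then u else 0) + qh ^ (-(A.d i * A.c i j)) • (es i u * fg A j))
    (m : ℤ) (Lm : Uq A →ₐ[𝕂] hA A) (hLm : ∀ i, Lm (fg A i) = ff A i m)
    (i : I) (β : I →₀ ℤ) (u : Uq A) (hu : u ∈ Uwt A β) :
    Ebr A i m ((m.negOnePow : ℤ) • β) (Lm u) =
        (qh ^ (A.d i * (-(hp A i β) - 2)) * zi A i) • Lm (e' i u) ∧
      Esbr A i m ((m.negOnePow : ℤ) • β) (Lm u) =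
        (qh ^ (A.d i * (-(hp A i β) - 2)) * zi A i) • Lm (es i u) := by
  refine Submodule.span_induction ?_ ?_ ?_ ?_ hu
  · rintro x ⟨l, hl, rfl⟩
    have hbl : (l.map fun i => Finsupp.single i (1 : ℤ)).sum = bl l := rfl
    rw [← hl, hbl]
    constructor
    · simp only [Ebr, ip_mon_E A i m l, exp_mon A i l]
      exact keyE A e' he'one he'f m Lm hLm i l
    · simp only [Esbr, ip_mon_Es A i m l, exp_mon A i l]
      exact keyEs A es hesone hesf m Lm hLm i l
  · simp [Ebr, Esbr]
  · rintro x y hx hy ⟨ihx1, ihx2⟩ ⟨ihy1, ihy2⟩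
    constructor
    · simp only [Ebr, map_add] at ihx1 ihy1 ⊢
      rw [smul_add, ← ihx1, ← ihy1, add_mul, mul_add, smul_add]
      abel
    · simp only [Esbr, map_add] at ihx2 ihy2 ⊢
      rw [smul_add, ← ihx2, ← ihy2, add_mul, mul_add, smul_add]
      abel
  · rintro c x hx ⟨ihx1, ihx2⟩
    constructor
    · simp only [Ebr, map_smul] at ihx1 ⊢
      rw [smul_comm _ c, ← ihx1, smul_mul_assoc, mul_smul_comm, smul_comm _ c, smul_sub]
    · simp only [Esbr, map_smul] at ihx2 ⊢
      rw [smul_comm _ c, ← ihx2, smul_mul_assoc, mul_smul_comm, smul_comm _ c, smul_sub]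

lemma Lm_mem (A : GCM I) (m : ℤ) (Lm : Uq A →ₐ[𝕂] hA A)
    (hLm : ∀ i, Lm (fg A i) = ff A i m) (v : Uq A) : Lm v ∈ hAk A m := by
  obtain ⟨w, rfl⟩ := RingQuot.mkAlgHom_surjective 𝕂 (URel A) v
  induction w using FreeAlgebra.induction with
  | grade0 r => rw [AlgHom.commutes, AlgHom.commutes]; exact Subalgebra.algebraMap_mem _ r
  | grade1 x =>
    have : (RingQuot.mkAlgHom 𝕂 (URel A)) (FreeAlgebra.ι 𝕂 x) = fg A x := rfl
    rw [this, hLm x]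
    exact Algebra.subset_adjoin ⟨x, m, le_refl m, le_refl m, rfl⟩
  | mul a b ha hb => rw [map_mul, map_mul]; exact mul_mem ha hb
  | add a b ha hb => rw [map_add, map_add]; exact add_mem ha hb
end part1
section grading
set_option linter.unusedSectionVars false
variable {I : Type} [DecidableEq I]

lemma map_serreIn {R S : Type} [Ring R] [Ring S] [Algebra 𝕂 R] [Algebra 𝕂 S]
    (φ : R →ₐ[𝕂] S) (A : GCM I) (i j : I) (a b : R) :
    φ (serreIn A i j a b) = serreIn A i j (φ a) (φ b) := by
  simp [serreIn, map_sum, map_smul, map_mul, map_pow]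

lemma serre_ff (A : GCM I) (i j : I) (p : ℤ) (hij : i ≠ j) :
    serreIn A i j (ff A i p) (ff A j p) = 0 := by
  have h := RingQuot.mkAlgHom_rel 𝕂 (hARel.serre (A := A) i j p hij)
  rw [map_serreIn, map_zero] at h
  exact h

/-- Weight of the generator `f_{i,p}`. -/
def wtf (p : I × ℤ) : I →₀ ℤ := Finsupp.single p.1 (((p.2 + 1).negOnePow : ℤ))

lemma ama_smul_single (A : GCM I) (c : 𝕂) (a : I →₀ ℤ) (b : hA A) :
    c • (AddMonoidAlgebra.single a b : AddMonoidAlgebra (hA A) (I →₀ ℤ))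
      = AddMonoidAlgebra.single a (c • b) := AddMonoidAlgebra.smul_single c a b

lemma ama_single_sum (A : GCM I) {ι : Type} (s : Finset ι) (a : I →₀ ℤ) (f : ι → hA A) :
    (AddMonoidAlgebra.single a (∑ x ∈ s, f x) : AddMonoidAlgebra (hA A) (I →₀ ℤ))
      = ∑ x ∈ s, AddMonoidAlgebra.single a (f x) := by
  apply AddMonoidAlgebra.coeff_injective
  rw [AddMonoidAlgebra.coeff_sum]
  simp only [AddMonoidAlgebra.coeff_single]
  exact Finsupp.single_finset_sum s f a

lemma serreIn_single (A : GCM I) (i j : I) (ga gb : I →₀ ℤ) (x y : hA A) :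
    serreIn A i j
        (AddMonoidAlgebra.single (R := hA A) ga x) (AddMonoidAlgebra.single gb y)
      = AddMonoidAlgebra.single ((1 - A.c i j).toNat • ga + gb) (serreIn A i j x y) := by
  unfold serreIn
  rw [ama_single_sum A]
  refine Finset.sum_congr rfl fun k hk => ?_
  have hk' : k ≤ (1 - A.c i j).toNat := by
    simp only [Finset.mem_range] at hk; omega
  rw [AddMonoidAlgebra.single_pow, AddMonoidAlgebra.single_pow,
    AddMonoidAlgebra.single_mul_single, AddMonoidAlgebra.single_mul_single,
    ama_smul_single A]
  congr 1
  rw [show k • ga + gb + ((1 - A.c i j).toNat - k) • ga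
      = (k + ((1 - A.c i j).toNat - k)) • ga + gb from by rw [add_smul]; abel]
  congr 2
  omega

/-- The grading homomorphism `Â → Â[weights]`. -/
def Phi (A : GCM I) : hA A →ₐ[𝕂] AddMonoidAlgebra (hA A) (I →₀ ℤ) :=
  RingQuot.liftAlgHom 𝕂 ⟨FreeAlgebra.lift 𝕂
      (fun p => AddMonoidAlgebra.single (wtf p) (ff A p.1 p.2)), by
    intro x y hrel
    induction hrel with
    | serre i j p hij =>
      have h2 := map_serreIn (FreeAlgebra.lift 𝕂
          fun p : I × ℤ => AddMonoidAlgebra.single (wtf p) (ff A p.1 p.2))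
        A i j (FreeAlgebra.ι 𝕂 (i, p)) (FreeAlgebra.ι 𝕂 (j, p))
      rw [h2, map_zero, FreeAlgebra.lift_ι_apply, FreeAlgebra.lift_ι_apply,
        serreIn_single, serre_ff A i j p hij]
      exact AddMonoidAlgebra.single_zero _
    | comm i j m p hmp =>
      rw [map_mul, map_add, map_smul, map_mul]
      rw [apply_ite (FreeAlgebra.lift 𝕂
        (fun p => AddMonoidAlgebra.single (R := hA A) (wtf p) (ff A p.1 p.2))),
        map_smul, map_one, map_zero]
      simp only [FreeAlgebra.lift_ι_apply]
      rw [AddMonoidAlgebra.single_mul_single, AddMonoidAlgebra.single_mul_single]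
      rw [ff_comm A i j m p hmp]
      rw [AddMonoidAlgebra.single_add, ← ama_smul_single A,
        add_comm (wtf (i, m)) (wtf (j, p))]
      congr 1
      by_cases hc : j = i ∧ p = m + 1
      · obtain ⟨hji, hpm⟩ := hc
        subst hji; subst hpm
        rw [if_pos ⟨rfl, rfl⟩, if_pos ⟨rfl, rfl⟩]
        have hW : wtf ((j : I), m + 1) + wtf ((j : I), m) = 0 := by
          unfold wtf
          rw [← Finsupp.single_add]
          have h1 : ((m + 1 + 1).negOnePow : ℤ) = -((m + 1).negOnePow : ℤ) := by
            rw [Int.negOnePow_succ, Units.val_neg]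
          rw [h1]
          simp
        rw [hW, AddMonoidAlgebra.one_def, ama_smul_single A]
      · rw [if_neg hc, if_neg hc, AddMonoidAlgebra.single_zero]⟩

lemma Phi_ff (A : GCM I) (i : I) (p : ℤ) :
    Phi A (ff A i p) = AddMonoidAlgebra.single (wtf (i, p)) (ff A i p) := by
  rw [Phi, ff, RingQuot.liftAlgHom_mkAlgHom_apply, FreeAlgebra.lift_ι_apply]
  rfl

lemma Phi_mon (A : GCM I) (l : List (I × ℤ)) :
    Phi A ((l.map fun p => ff A p.1 p.2).prod)
      = AddMonoidAlgebra.single ((l.map wtf).sum) ((l.map fun p => ff A p.1 p.2).prod) := by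
  induction l with
  | nil => simp [AddMonoidAlgebra.one_def]
  | cons a l ih =>
    simp only [List.map_cons, List.prod_cons, List.sum_cons, map_mul, ih, Phi_ff,
      AddMonoidAlgebra.single_mul_single]

lemma Phi_wt (A : GCM I) (β : I →₀ ℤ) (x : hA A) (hx : x ∈ hAwt A β) :
    Phi A x = AddMonoidAlgebra.single β x := by
  refine Submodule.span_induction ?_ ?_ ?_ ?_ hx
  · rintro y ⟨l, hl, rfl⟩
    have hl' : (l.map wtf).sum = β := by
      rw [← hl]; rfl
    rw [Phi_mon, hl']
  · rw [map_zero, AddMonoidAlgebra.single_zero]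
  · intro a b _ _ iha ihb
    rw [map_add, iha, ihb, AddMonoidAlgebra.single_add]
  · intro c a _ iha
    rw [map_smul, iha, ama_smul_single A]
end grading
section mon
set_option linter.unusedSectionVars false
variable {I : Type} [DecidableEq I]

/-- Span of the level-`m` monomials of weight `β`. -/
def Mon (A : GCM I) (m : ℤ) (β : I →₀ ℤ) : Submodule 𝕂 (hA A) :=
  Submodule.span 𝕂 {x | ∃ l : List I,
    (l.map fun j => Finsupp.single j (((m + 1).negOnePow : ℤ))).sum = β ∧
    x = (l.map fun j => ff A j m).prod}

lemma Mon_mul (A : GCM I) (m : ℤ) {γ δ : I →₀ ℤ} {x y : hA A}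
    (hx : x ∈ Mon A m γ) (hy : y ∈ Mon A m δ) : x * y ∈ Mon A m (γ + δ) := by
  refine Submodule.span_induction ?_ ?_ ?_ ?_ hx
  · rintro a ⟨l, hl, rfl⟩
    refine Submodule.span_induction ?_ ?_ ?_ ?_ hy
    · rintro b ⟨l', hl', rfl⟩
      refine Submodule.subset_span ⟨l ++ l', ?_, by simp⟩
      simp [← hl, ← hl']
    · simp only [mul_zero]; exact zero_mem _
    · intro b c _ _ ihb ihc; rw [mul_add]; exact add_mem ihb ihc
    · intro c b _ ihb; rw [mul_smul_comm]; exact Submodule.smul_mem _ c ihb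
  · simp only [zero_mul]; exact zero_mem _
  · intro a b _ _ iha ihb; rw [add_mul]; exact add_mem iha ihb
  · intro c a _ iha; rw [smul_mul_assoc]; exact Submodule.smul_mem _ c iha

lemma coeff_mem (A : GCM I) (m : ℤ) (x : hA A) (hx : x ∈ hAk A m) :
    ∀ β : I →₀ ℤ, (Phi A x).coeff β ∈ Mon A m β := by
  refine Algebra.adjoin_induction ?_ ?_ ?_ ?_ hx
  · rintro a ⟨i, k, hk1, hk2, rfl⟩
    intro β
    have hkm : k = m := le_antisymm hk2 hk1
    subst hkm
    rw [Phi_ff]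
    by_cases hb : wtf ((i : I), k) = β
    · rw [show (AddMonoidAlgebra.single (wtf ((i : I), k)) (ff A i k)).coeff β = ff A i k from by
        rw [← hb]; exact Finsupp.single_eq_same]
      refine Submodule.subset_span ⟨[i], ?_, by simp⟩
      rw [← hb]; simp [wtf]
    · rw [show (AddMonoidAlgebra.single (wtf ((i : I), k)) (ff A i k)).coeff β = 0 from
        Finsupp.single_eq_of_ne (Ne.symm hb)]
      exact zero_mem _
  · intro r β
    rw [AlgHom.commutes]
    have h1 : (algebraMap 𝕂 (AddMonoidAlgebra (hA A) (I →₀ ℤ))) r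
        = AddMonoidAlgebra.single 0 (algebraMap 𝕂 (hA A) r) := by
      rw [Algebra.algebraMap_eq_smul_one, AddMonoidAlgebra.one_def, ama_smul_single A,
        Algebra.algebraMap_eq_smul_one]
    rw [h1]
    by_cases hb : (0 : I →₀ ℤ) = β
    · rw [show (AddMonoidAlgebra.single (0 : I →₀ ℤ) (algebraMap 𝕂 (hA A) r)).coeff β
          = algebraMap 𝕂 (hA A) r from by rw [← hb]; exact Finsupp.single_eq_same]
      rw [Algebra.algebraMap_eq_smul_one]
      refine Submodule.smul_mem _ r (Submodule.subset_span ⟨[], ?_, by simp⟩)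
      rw [← hb]; simp
    · rw [show (AddMonoidAlgebra.single (0 : I →₀ ℤ) (algebraMap 𝕂 (hA A) r)).coeff β = 0 from
        Finsupp.single_eq_of_ne (Ne.symm hb)]
      exact zero_mem _
  · intro a b _ _ iha ihb β
    rw [map_add, AddMonoidAlgebra.coeff_add, Finsupp.add_apply]
    exact add_mem (iha β) (ihb β)
  · intro a b _ _ iha ihb β
    rw [map_mul, AddMonoidAlgebra.coeff_mul]
    refine Submodule.sum_mem _ fun g1 _ => Submodule.sum_mem _ fun g2 _ => ?_
    show (if g1 + g2 = β then ((Phi A) a).coeff g1 * ((Phi A) b).coeff g2 else 0) ∈ Mon A m β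
    by_cases hc : g1 + g2 = β
    · rw [if_pos hc, ← hc]
      exact Mon_mul A m (iha g1) (ihb g2)
    · rw [if_neg hc]; exact zero_mem _

lemma mem_Mon (A : GCM I) (m : ℤ) (β : I →₀ ℤ) (x : hA A)
    (h1 : x ∈ hAk A m) (h2 : x ∈ hAwt A β) : x ∈ Mon A m β := by
  have h3 := Phi_wt A β x h2
  have h4 := coeff_mem A m x h1 β
  rw [h3] at h4
  rwa [show (AddMonoidAlgebra.single β x).coeff β = x from Finsupp.single_eq_same] at h4
end mon
section part2
set_option linter.unusedSectionVars false
variable {I : Type} [DecidableEq I]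

lemma Ebr_zero (A : GCM I) (i : I) (m : ℤ) (β : I →₀ ℤ) : Ebr A i m β 0 = 0 := by
  simp [Ebr]

lemma Esbr_zero (A : GCM I) (i : I) (m : ℤ) (β : I →₀ ℤ) : Esbr A i m β 0 = 0 := by
  simp [Esbr]

lemma Ebr_add (A : GCM I) (i : I) (m : ℤ) (β : I →₀ ℤ) (x y : hA A) :
    Ebr A i m β (x + y) = Ebr A i m β x + Ebr A i m β y := by
  simp only [Ebr, add_mul, mul_add, smul_add]; abel

lemma Esbr_add (A : GCM I) (i : I) (m : ℤ) (β : I →₀ ℤ) (x y : hA A) :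
    Esbr A i m β (x + y) = Esbr A i m β x + Esbr A i m β y := by
  simp only [Esbr, add_mul, mul_add, smul_add]; abel

lemma Ebr_smul (A : GCM I) (i : I) (m : ℤ) (β : I →₀ ℤ) (c : 𝕂) (x : hA A) :
    Ebr A i m β (c • x) = c • Ebr A i m β x := by
  simp only [Ebr, smul_mul_assoc, mul_smul_comm, smul_sub]
  rw [smul_comm c]

lemma Esbr_smul (A : GCM I) (i : I) (m : ℤ) (β : I →₀ ℤ) (c : 𝕂) (x : hA A) :
    Esbr A i m β (c • x) = c • Esbr A i m β x := by
  simp only [Esbr, smul_mul_assoc, mul_smul_comm, smul_sub]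
  rw [smul_comm c]

lemma mon_wt_eq (m : ℤ) (l : List I) :
    (l.map fun j => Finsupp.single j (((m + 1).negOnePow : ℤ))).sum
      = (m.negOnePow : ℤ) • (-((l.map fun i => Finsupp.single i (1 : ℤ)).sum)) := by
  induction l with
  | nil => simp
  | cons j l ih =>
    simp only [List.map_cons, List.sum_cons, neg_add, smul_add, ← ih]
    congr 1
    have hval : (((m + 1).negOnePow : ℤ)) = -((m.negOnePow : ℤ)) := by
      rw [Int.negOnePow_succ, Units.val_neg]
    rw [hval, smul_neg, Finsupp.smul_single, smul_eq_mul, mul_one, ← Finsupp.single_neg]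

lemma part2 (A : GCM I) (e' es : I → Module.End 𝕂 (Uq A))
    (he'one : ∀ i, e' i 1 = 0)
    (he'f : ∀ i j u, e' i (fg A j * u) =
      (if i = j then u else 0) + qh ^ (-(A.d i * A.c i j)) • (fg A j * e' i u))
    (hesone : ∀ i, es i 1 = 0)
    (hesf : ∀ i j u, es i (u * fg A j) =
      (if i = j then u else 0) + qh ^ (-(A.d i * A.c i j)) • (es i u * fg A j))
    (m : ℤ) (Lm : Uq A →ₐ[𝕂] hA A) (hLm : ∀ i, Lm (fg A i) = ff A i m)
    (i : I) (β : I →₀ ℤ) (x : hA A) (hx : x ∈ Mon A m β) :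
    Ebr A i m β x ∈ hAk A m ∧ Esbr A i m β x ∈ hAk A m := by
  refine Submodule.span_induction ?_ ?_ ?_ ?_ hx
  · rintro w ⟨l, hl, rfl⟩
    have hu : ((l.map (fg A)).prod : Uq A)
        ∈ Uwt A (-((l.map fun i => Finsupp.single i (1 : ℤ)).sum)) :=
      Submodule.subset_span ⟨l, rfl, rfl⟩
    have hLmu : Lm ((l.map (fg A)).prod) = (l.map fun j => ff A j m).prod := by
      rw [map_list_prod, List.map_map]
      congr 1
      exact List.map_congr_left fun j _ => hLm j
    have hβ : β = (m.negOnePow : ℤ) • (-((l.map fun i => Finsupp.single i (1 : ℤ)).sum)) := by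
      rw [← hl, mon_wt_eq]
    obtain ⟨h1, h2⟩ := part1 A e' es he'one he'f hesone hesf m Lm hLm i
      (-((l.map fun i => Finsupp.single i (1 : ℤ)).sum)) _ hu
    constructor
    · rw [hβ, ← hLmu, h1]
      exact Subalgebra.smul_mem _ (Lm_mem A m Lm hLm _) _
    · rw [hβ, ← hLmu, h2]
      exact Subalgebra.smul_mem _ (Lm_mem A m Lm hLm _) _
  · rw [Ebr_zero, Esbr_zero]; exact ⟨zero_mem _, zero_mem _⟩
  · intro a b _ _ iha ihb
    rw [Ebr_add, Esbr_add]
    exact ⟨add_mem iha.1 ihb.1, add_mem iha.2 ihb.2⟩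
  · intro c a _ iha
    rw [Ebr_smul, Esbr_smul]
    exact ⟨Subalgebra.smul_mem _ iha.1 _, Subalgebra.smul_mem _ iha.2 _⟩
end part2

/-- for homogeneous `u ∈ U_q^-(g)` of weight `β`,
`E_{i,m}(L_m(u)) = q_i^{-⟨h_i, wt u⟩ - 2} ζ_i L_m(e_i'(u))` and
`E*_{i,m}(L_m(u)) = q_i^{-⟨h_i, wt u⟩ - 2} ζ_i L_m(e_i^*(u))`;
in particular `E_{i,m}` and `E*_{i,m}` preserve `Â[m]`.
Here `L_m` is the algebra isomorphism `U → Â[m]` with `L_m(f_i) = f_{i,m}` (so `L_m(u)`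
has `Â`-weight `(-1)^m β`), and `e_i'`, `e_i^*` are characterized as in the context. -/
theorem statement11 (A : GCM I)
    (e' es : I → Module.End 𝕂 (Uq A))
    (he'one : ∀ i, e' i 1 = 0)
    (he'f : ∀ i j u, e' i (fg A j * u) =
      (if i = j then u else 0) + qh ^ (-(A.d i * A.c i j)) • (fg A j * e' i u))
    (hesone : ∀ i, es i 1 = 0)
    (hesf : ∀ i j u, es i (u * fg A j) =
      (if i = j then u else 0) + qh ^ (-(A.d i * A.c i j)) • (es i u * fg A j))
    (m : ℤ) (Lm : Uq A →ₐ[𝕂] hA A) (hLm : ∀ i, Lm (fg A i) = ff A i m) :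
    (∀ (i : I) (β : I →₀ ℤ) (u : Uq A), u ∈ Uwt A β →
      Ebr A i m ((m.negOnePow : ℤ) • β) (Lm u) =
        (qh ^ (A.d i * (-(hp A i β) - 2)) * zi A i) • Lm (e' i u) ∧
      Esbr A i m ((m.negOnePow : ℤ) • β) (Lm u) =
        (qh ^ (A.d i * (-(hp A i β) - 2)) * zi A i) • Lm (es i u)) ∧
    (∀ (i : I) (β : I →₀ ℤ) (x : hA A), x ∈ hAk A m → x ∈ hAwt A β →
      Ebr A i m β x ∈ hAk A m ∧ Esbr A i m β x ∈ hAk A m) := by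
  constructor
  · intro i β u hu
    exact part1 A e' es he'one he'f hesone hesf m Lm hLm i β u hu
  · intro i β x hx1 hx2
    exact part2 A e' es he'one he'f hesone hesf m Lm hLm i β x (mem_Mon A m β x hx1 hx2)

end
end

section
/- For any x ∈ Â one has M(x^⋆) = M(𝒟̄(x)) = M(x); consequently, for the form ⟨⟨x,y⟩⟩ = M(x·𝒟̄(y)) one has ⟨⟨x,y⟩⟩ = ⟨⟨𝒟̄(x), 𝒟̄(y)⟩⟩ = ⟨⟨y^⋆, x^⋆⟩⟩ for all x,y ∈ Â, and ⟨⟨x,y⟩⟩ = 0 whenever x,y are homogeneous with wt(x) ≠ wt(y). -/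
/- Common setting: a symmetrizable generalized Cartan matrix, the field
`𝕂 = ℚ(q^{1/2})` (with `sqv = q^{1/2}` and `q = qh = sqv²`), quantum integers, the bosonic
extension `hA A` presented by the `q`-Serre relations and the bosonic commutation
relations, its weight spaces and distinguished subalgebras, and the root-lattice
pairing. -/

set_option maxHeartbeats 1000000
set_option synthInstance.maxHeartbeats 400000

noncomputable section

variable {I : Type} [DecidableEq I]

namespace S12

variable {I : Type} [DecidableEq I]

def wtp (p : I × ℤ) : I →₀ ℤ := Finsupp.single p.1 (((p.2 + 1).negOnePow : ℤ))

def wtl (l : List (I × ℤ)) : I →₀ ℤ :=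
  (l.map fun p => Finsupp.single p.1 (((p.2 + 1).negOnePow : ℤ))).sum

def fprod (A : GCM I) (l : List (I × ℤ)) : hA A := (l.map fun p => ff A p.1 p.2).prod

@[simp] lemma fprod_nil (A : GCM I) : fprod A [] = 1 := rfl

@[simp] lemma fprod_cons (A : GCM I) (x : I × ℤ) (l : List (I × ℤ)) :
    fprod A (x :: l) = ff A x.1 x.2 * fprod A l := by
  simp [fprod]

lemma fprod_append (A : GCM I) (l1 l2 : List (I × ℤ)) :
    fprod A (l1 ++ l2) = fprod A l1 * fprod A l2 := by
  simp [fprod]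

@[simp] lemma wtl_nil : wtl ([] : List (I × ℤ)) = 0 := rfl

@[simp] lemma wtl_cons (x : I × ℤ) (l : List (I × ℤ)) : wtl (x :: l) = wtp x + wtl l := by
  simp [wtl, wtp]

lemma wtl_append (l1 l2 : List (I × ℤ)) : wtl (l1 ++ l2) = wtl l1 + wtl l2 := by
  simp [wtl]

lemma hAwt_eq (A : GCM I) (β : I →₀ ℤ) :
    hAwt A β = Submodule.span 𝕂 {x | ∃ l, wtl l = β ∧ x = fprod A l} := rfl

/-- The commutation relation in `hA`. -/
lemma ffcomm (A : GCM I) (i j : I) (m p : ℤ) (h : m < p) :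
    ff A i m * ff A j p = qh ^ (((p - m + 1).negOnePow : ℤ) * (A.d i * A.c i j)) •
        (ff A j p * ff A i m)
      + (if j = i ∧ p = m + 1 then ((1 : 𝕂) - qd A i ^ 2) • (1 : hA A) else 0) := by
  have h1 := RingQuot.mkAlgHom_rel 𝕂 (hARel.comm (A := A) i j m p h)
  simpa [ff, map_add, map_mul, map_smul, map_one,
    apply_ite (RingQuot.mkAlgHom 𝕂 (hARel A))] using h1

def Dsc : ℤ → List (I × ℤ) → Prop
  | _, [] => True
  | N, x :: l => x.2 ≤ N ∧ Dsc x.2 l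

lemma Dsc.mono : ∀ {l : List (I × ℤ)} {N N' : ℤ}, N ≤ N' → Dsc N l → Dsc N' l
  | [], _, _, _, _ => trivial
  | _ :: _, _, _, h, hd => ⟨hd.1.trans h, hd.2⟩

lemma Dsc.le : ∀ {l : List (I × ℤ)} {N : ℤ}, Dsc N l → ∀ q ∈ l, q.2 ≤ N
  | [], _, _, q, hq => absurd hq List.not_mem_nil
  | p :: t, N, hd, q, hq => by
    rcases List.mem_cons.1 hq with rfl | hq
    · exact hd.1
    · exact (Dsc.le hd.2 q hq).trans hd.1

def TT (A : GCM I) (N : ℤ) (β : I →₀ ℤ) : Submodule 𝕂 (hA A) :=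
  Submodule.span 𝕂 {x | ∃ l, Dsc N l ∧ wtl l = β ∧ x = fprod A l}

lemma TT_mono (A : GCM I) {N N' : ℤ} (h : N ≤ N') (β : I →₀ ℤ) : TT A N β ≤ TT A N' β :=
  Submodule.span_mono fun _ h' => by
    obtain ⟨l, h1, h2, h3⟩ := h'; exact ⟨l, h1.mono h, h2, h3⟩

lemma mulLeft_TT (A : GCM I) {i : I} {m N : ℤ} (hmN : m ≤ N) {β : I →₀ ℤ}
    {x : hA A} (hx : x ∈ TT A m β) : ff A i m * x ∈ TT A N (wtp (i, m) + β) := by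
  induction hx using Submodule.span_induction with
  | mem x h =>
    obtain ⟨l, h1, h2, h3⟩ := h
    refine Submodule.subset_span ⟨(i, m) :: l, ⟨hmN, h1⟩, ?_, ?_⟩
    · simp [h2]
    · simp [h3]
  | zero => rw [mul_zero]; exact zero_mem _
  | add x y hx hy ihx ihy => rw [mul_add]; exact add_mem ihx ihy
  | smul a x hx ih => rw [mul_smul_comm]; exact Submodule.smul_mem _ _ ih

lemma sortStep (A : GCM I) : ∀ (l : List (I × ℤ)) (j : I) (p N : ℤ), p ≤ N → Dsc N l →
    ff A j p * fprod A l ∈ TT A N (wtp (j, p) + wtl l)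
  | [], j, p, N, hpN, _ => by
    refine Submodule.subset_span ⟨[(j, p)], ⟨hpN, trivial⟩, ?_, ?_⟩ <;> simp
  | (i, m) :: l, j, p, N, hpN, hd => by
    obtain ⟨hmN, hl⟩ := hd
    rcases le_or_gt m p with hmp | hpm
    · refine Submodule.subset_span ⟨(j, p) :: (i, m) :: l, ⟨hpN, hmp, hl⟩, ?_, ?_⟩ <;> simp
    · have key : ff A j p * fprod A ((i, m) :: l)
          = qh ^ (((m - p + 1).negOnePow : ℤ) * (A.d j * A.c j i)) •
              (ff A i m * (ff A j p * fprod A l))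
            + (if i = j ∧ m = p + 1 then ((1 : 𝕂) - qd A j ^ 2) • fprod A l else 0) := by
        rw [fprod_cons, ← mul_assoc, ffcomm A j i p m hpm]
        by_cases hc : i = j ∧ m = p + 1 <;>
          simp [hc, add_mul, smul_mul_assoc, mul_assoc]
      rw [key]
      refine add_mem (Submodule.smul_mem _ _ ?_) ?_
      · have h1 : ff A j p * fprod A l ∈ TT A m (wtp (j, p) + wtl l) :=
          sortStep A l j p m hpm.le hl
        have h2 := mulLeft_TT A (i := i) hmN h1
        have hw : wtp (j, p) + wtl ((i, m) :: l) = wtp (i, m) + (wtp (j, p) + wtl l) := by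
          rw [wtl_cons]; abel
        rw [hw]; exact h2
      · split_ifs with hc
        · obtain ⟨hij, hm⟩ := hc
          have h0 : wtp (j, p) + wtp (i, m) = 0 := by
            subst hij hm
            simp only [wtp]
            rw [← Finsupp.single_add]
            have : ((p + 1 + 1).negOnePow : ℤ) = -((p + 1).negOnePow : ℤ) := by
              rw [Int.negOnePow_succ]; push_cast; ring
            rw [this]
            simp
          have hw : wtp (j, p) + wtl ((i, m) :: l) = wtl l := by
            rw [wtl_cons, ← add_assoc, h0, zero_add]
          rw [hw]
          exact Submodule.smul_mem _ _
            (TT_mono A hmN _ (Submodule.subset_span ⟨l, hl, rfl, rfl⟩))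
        · exact zero_mem _

def TD (A : GCM I) (β : I →₀ ℤ) : Submodule 𝕂 (hA A) :=
  Submodule.span 𝕂 {x | ∃ l N, Dsc N l ∧ wtl l = β ∧ x = fprod A l}

lemma TT_le_TD (A : GCM I) (N : ℤ) (β : I →₀ ℤ) : TT A N β ≤ TD A β :=
  Submodule.span_mono fun _ h => by
    obtain ⟨l, h1, h2, h3⟩ := h; exact ⟨l, N, h1, h2, h3⟩

lemma mulLeft_TD (A : GCM I) (j : I) (p : ℤ) {β : I →₀ ℤ} {x : hA A} (hx : x ∈ TD A β) :
    ff A j p * x ∈ TD A (wtp (j, p) + β) := by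
  induction hx using Submodule.span_induction with
  | mem x h =>
    obtain ⟨l, N, h1, h2, h3⟩ := h
    subst h3
    rw [← h2]
    exact TT_le_TD A (max p N) _
      (sortStep A l j p (max p N) (le_max_left _ _) (h1.mono (le_max_right _ _)))
  | zero => rw [mul_zero]; exact zero_mem _
  | add x y hx hy ihx ihy => rw [mul_add]; exact add_mem ihx ihy
  | smul a x hx ih => rw [mul_smul_comm]; exact Submodule.smul_mem _ _ ih

lemma fprod_mem_TD (A : GCM I) : ∀ l : List (I × ℤ), fprod A l ∈ TD A (wtl l)
  | [] => Submodule.subset_span ⟨[], 0, trivial, rfl, rfl⟩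
  | x :: l => by
    rw [fprod_cons, wtl_cons]
    exact mulLeft_TD A x.1 x.2 (fprod_mem_TD A l)

lemma words_span (A : GCM I) (x : hA A) :
    x ∈ Submodule.span 𝕂 {y : hA A | ∃ l, y = fprod A l} := by
  obtain ⟨z, rfl⟩ := RingQuot.mkAlgHom_surjective 𝕂 (hARel A) x
  induction z using FreeAlgebra.induction with
  | grade0 r =>
    rw [AlgHom.commutes, Algebra.algebraMap_eq_smul_one]
    exact Submodule.smul_mem _ _ (Submodule.subset_span ⟨[], rfl⟩)
  | grade1 p =>
    exact Submodule.subset_span ⟨[p], by simp [ff]⟩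
  | mul a b ha hb =>
    rw [map_mul]
    have := Submodule.mul_mem_mul ha hb
    rw [Submodule.span_mul_span] at this
    refine Submodule.span_le.mpr ?_ this
    rintro z ⟨a', ⟨l1, rfl⟩, b', ⟨l2, rfl⟩, rfl⟩
    exact Submodule.subset_span ⟨l1 ++ l2, (fprod_append A l1 l2).symm⟩
  | add a b ha hb => rw [map_add]; exact add_mem ha hb

lemma wtl_const_level (m : ℤ) (i₀ : I) : ∀ (l : List (I × ℤ)), (∀ p ∈ l, p.2 = m) →
    wtl l i₀ = (((m + 1).negOnePow : ℤ)) * (l.countP (fun p => p.1 = i₀))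
  | [], _ => by simp
  | x :: t, h => by
    have hx : x.2 = m := h x (List.mem_cons_self)
    have ih := wtl_const_level m i₀ t fun q hq => h q (List.mem_cons_of_mem _ hq)
    by_cases hi : x.1 = i₀
    · simp only [wtl_cons, Finsupp.add_apply, ih, List.countP_cons, wtp, hx, hi,
        Finsupp.single_apply, if_pos rfl]
      try simp
      try push_cast
      try ring
    · simp only [wtl_cons, Finsupp.add_apply, ih, List.countP_cons, wtp, hx,
        Finsupp.single_apply, if_neg hi]
      try simp [hi]
      try push_cast
      try ring

lemma wtl_ne_zero_of_const (m : ℤ) (l : List (I × ℤ)) (hne : l ≠ [])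
    (h : ∀ p ∈ l, p.2 = m) : wtl l ≠ 0 := by
  intro hcontra
  obtain ⟨x, t, rfl⟩ := List.exists_cons_of_ne_nil hne
  have h1 := wtl_const_level m x.1 (x :: t) h
  rw [hcontra] at h1
  have hc0 : (((m + 1).negOnePow : ℤ)) ≠ 0 := Units.ne_zero _
  have hk : ((List.countP (fun p => decide (p.1 = x.1)) (x :: t) : ℕ) : ℤ) = 0 := by
    rcases mul_eq_zero.1 h1.symm with h' | h'
    · exact absurd h' hc0
    · exact h'
  rw [List.countP_cons_of_pos (by simp)] at hk
  push_cast at hk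
  omega

lemma dsc_drop : ∀ (t : List (I × ℤ)) (m : ℤ), Dsc m t →
    ∀ p ∈ t.dropWhile (fun p => decide (p.2 = m)), p.2 ≤ m - 1
  | [], m, _, p, hp => by simp [List.dropWhile] at hp
  | x :: t, m, hd, p, hp => by
    by_cases hx : x.2 = m
    · rw [List.dropWhile_cons_of_pos (by simp [hx])] at hp
      exact dsc_drop t m (Dsc.mono (le_of_eq hx) hd.2) p hp
    · rw [List.dropWhile_cons_of_neg (by simp [hx])] at hp
      have hxm : x.2 ≤ m - 1 := by
        have := hd.1; omega
      rcases List.mem_cons.1 hp with rfl | hp'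
      · exact hxm
      · exact le_trans (Dsc.le hd.2 p hp') hxm

lemma fprod_mem_hAk (A : GCM I) (m : ℤ) : ∀ l : List (I × ℤ), (∀ p ∈ l, p.2 = m) →
    fprod A l ∈ hAk A m
  | [], _ => one_mem _
  | x :: t, h => by
    rw [fprod_cons]
    refine mul_mem (Algebra.subset_adjoin ⟨x.1, x.2, ?_, ?_, rfl⟩)
      (fprod_mem_hAk A m t fun p hp => h p (List.mem_cons_of_mem _ hp))
    · exact (h x (List.mem_cons_self)).ge
    · exact (h x (List.mem_cons_self)).le

lemma fprod_mem_hAle (A : GCM I) (m : ℤ) : ∀ l : List (I × ℤ), (∀ p ∈ l, p.2 ≤ m) →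
    fprod A l ∈ hAle A m
  | [], _ => one_mem _
  | x :: t, h => by
    rw [fprod_cons]
    exact mul_mem (Algebra.subset_adjoin ⟨x.1, x.2, h x (List.mem_cons_self), rfl⟩)
      (fprod_mem_hAle A m t fun p hp => h p (List.mem_cons_of_mem _ hp))

lemma M_desc_ne_nil (A : GCM I) (M : hA A →ₗ[𝕂] 𝕂)
    (hMzero : ∀ (m : ℤ) (β : I →₀ ℤ), β ≠ 0 → ∀ y, y ∈ hAk A m → y ∈ hAwt A β →
      ∀ u ∈ hAgt A m, ∀ v ∈ hAlt A m, M (u * y * v) = 0) :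
    ∀ (l : List (I × ℤ)) (N : ℤ), Dsc N l → l ≠ [] → M (fprod A l) = 0 := by
  rintro (_ | ⟨⟨i, m⟩, t⟩) N hd hne
  · exact absurd rfl hne
  obtain ⟨hmN, ht⟩ := hd
  set tw := t.takeWhile (fun p => decide (p.2 = m)) with htw
  set dw := t.dropWhile (fun p => decide (p.2 = m)) with hdw
  have hsplit : t = tw ++ dw :=
    (List.takeWhile_append_dropWhile (p := fun p => decide (p.2 = m)) (l := t)).symm
  have htwm : ∀ p ∈ (((i, m) : I × ℤ) :: tw), p.2 = m := by
    intro p hp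
    rcases List.mem_cons.1 hp with rfl | hp'
    · rfl
    · rw [htw] at hp'
      have h' := List.mem_takeWhile_imp hp'
      simpa using h' 
  have hdwm : ∀ p ∈ dw, p.2 ≤ m - 1 := dsc_drop t m ht
  have hβ : wtl (((i, m) : I × ℤ) :: tw) ≠ 0 :=
    wtl_ne_zero_of_const m _ (by simp) htwm
  have hy : fprod A ((i, m) :: tw) ∈ hAk A m := fprod_mem_hAk A m _ htwm
  have hyw : fprod A ((i, m) :: tw) ∈ hAwt A (wtl (((i, m) : I × ℤ) :: tw)) := by
    rw [hAwt_eq]; exact Submodule.subset_span ⟨_, rfl, rfl⟩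
  have hv : fprod A dw ∈ hAlt A m := fprod_mem_hAle A (m - 1) dw hdwm
  have hz := hMzero m _ hβ _ hy hyw 1 (one_mem _) _ hv
  rw [one_mul] at hz
  have heq : fprod A ((i, m) :: t) = fprod A ((i, m) :: tw) * fprod A dw := by
    conv_lhs => rw [hsplit]
    rw [show (((i, m) : I × ℤ) :: (tw ++ dw)) = ((i, m) :: tw) ++ dw from rfl, fprod_append]
  rw [heq]
  exact hz

lemma M_eq_on_TD (A : GCM I) (M₁ M₂ : hA A →ₗ[𝕂] 𝕂)
    (h1 : M₁ 1 = 1) (h2 : M₂ 1 = 1)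
    (hz1 : ∀ (N : ℤ) (l : List (I × ℤ)), Dsc N l → l ≠ [] → M₁ (fprod A l) = 0)
    (hz2 : ∀ (N : ℤ) (l : List (I × ℤ)), Dsc N l → l ≠ [] → M₂ (fprod A l) = 0)
    {β : I →₀ ℤ} {z : hA A} (hz : z ∈ TD A β) : M₁ z = M₂ z := by
  induction hz using Submodule.span_induction with
  | mem a ha =>
    obtain ⟨w, N, hw1, _, rfl⟩ := ha
    rcases eq_or_ne w [] with rfl | hne
    · rw [fprod_nil, h1, h2]
    · rw [hz1 N w hw1 hne, hz2 N w hw1 hne]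
  | zero => rw [map_zero, map_zero]
  | add a b _ _ iha ihb => rw [map_add, map_add, iha, ihb]
  | smul c a _ ih => rw [map_smul, map_smul, ih]

lemma M_unique (A : GCM I) (M₁ M₂ : hA A →ₗ[𝕂] 𝕂)
    (h1 : M₁ 1 = 1) (h2 : M₂ 1 = 1)
    (hz1 : ∀ (N : ℤ) (l : List (I × ℤ)), Dsc N l → l ≠ [] → M₁ (fprod A l) = 0)
    (hz2 : ∀ (N : ℤ) (l : List (I × ℤ)), Dsc N l → l ≠ [] → M₂ (fprod A l) = 0) :
    ∀ x, M₁ x = M₂ x := by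
  intro x
  have hx := words_span A x
  induction hx using Submodule.span_induction with
  | mem y hy =>
    obtain ⟨l, rfl⟩ := hy
    exact M_eq_on_TD A M₁ M₂ h1 h2 hz1 hz2 (fprod_mem_TD A l)
  | zero => rw [map_zero, map_zero]
  | add a b _ _ iha ihb => rw [map_add, map_add, iha, ihb]
  | smul c a _ ih => rw [map_smul, map_smul, ih]

lemma M_zero_on_TD (A : GCM I) (M : hA A →ₗ[𝕂] 𝕂)
    (hz : ∀ (N : ℤ) (l : List (I × ℤ)), Dsc N l → l ≠ [] → M (fprod A l) = 0)
    {δ : I →₀ ℤ} (hδ : δ ≠ 0) {z : hA A} (hzz : z ∈ TD A δ) : M z = 0 := by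
  induction hzz using Submodule.span_induction with
  | mem b hb =>
    obtain ⟨w, N, hw1, hw2, rfl⟩ := hb
    refine hz N w hw1 ?_
    rintro rfl
    exact hδ (by simpa using hw2.symm)
  | zero => rw [map_zero]
  | add a b _ _ iha ihb => rw [map_add, iha, ihb, add_zero]
  | smul c a _ ih => rw [map_smul, ih, smul_zero]

lemma M_wt_zero (A : GCM I) (M : hA A →ₗ[𝕂] 𝕂)
    (hz : ∀ (N : ℤ) (l : List (I × ℤ)), Dsc N l → l ≠ [] → M (fprod A l) = 0)
    {δ : I →₀ ℤ} (hδ : δ ≠ 0) {z : hA A} (hzz : z ∈ hAwt A δ) : M z = 0 := by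
  rw [hAwt_eq] at hzz
  induction hzz using Submodule.span_induction with
  | mem a ha =>
    obtain ⟨l, hl, rfl⟩ := ha
    have h3 := fprod_mem_TD A l
    rw [hl] at h3
    exact M_zero_on_TD A M hz hδ h3
  | zero => rw [map_zero]
  | add a b _ _ iha ihb => rw [map_add, iha, ihb, add_zero]
  | smul c a _ ih => rw [map_smul, ih, smul_zero]

lemma map_adjoin_mem (A : GCM I) {S T : Set (hA A)} (Dm : hA A ≃ₐ[𝕂] hA A)
    (h : ∀ s ∈ S, Dm s ∈ Algebra.adjoin 𝕂 T) {x : hA A} (hx : x ∈ Algebra.adjoin 𝕂 S) :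
    Dm x ∈ Algebra.adjoin 𝕂 T := by
  induction hx using Algebra.adjoin_induction with
  | mem s hs => exact h s hs
  | algebraMap r => rw [AlgEquiv.commutes]; exact algebraMap_mem _ r
  | add a b _ _ ha hb => rw [map_add]; exact add_mem ha hb
  | mul a b _ _ ha hb => rw [map_mul]; exact mul_mem ha hb

lemma anti_adjoin_mem (A : GCM I) {S T : Set (hA A)} (st : hA A →ₗ[𝕂] hA A)
    (hstone : st 1 = 1) (hstmul : ∀ x y, st (x * y) = st y * st x)
    (h : ∀ s ∈ S, st s ∈ Algebra.adjoin 𝕂 T) {x : hA A} (hx : x ∈ Algebra.adjoin 𝕂 S) :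
    st x ∈ Algebra.adjoin 𝕂 T := by
  induction hx using Algebra.adjoin_induction with
  | mem s hs => exact h s hs
  | algebraMap r =>
    rw [Algebra.algebraMap_eq_smul_one, map_smul, hstone]
    exact Subalgebra.smul_mem _ (one_mem _) r
  | add a b _ _ ha hb => rw [map_add]; exact add_mem ha hb
  | mul a b _ _ ha hb => rw [hstmul]; exact mul_mem hb ha

lemma Dm_fprod (A : GCM I) (Dm : hA A ≃ₐ[𝕂] hA A)
    (hD : ∀ i p, Dm (ff A i p) = ff A i (p + 1)) :
    ∀ l : List (I × ℤ), Dm (fprod A l) = fprod A (l.map fun p => (p.1, p.2 + 1))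
  | [] => by simp
  | x :: l => by
    rw [fprod_cons, map_mul, hD, Dm_fprod A Dm hD l, List.map_cons, fprod_cons]

lemma st_fprod (A : GCM I) (st : hA A →ₗ[𝕂] hA A) (hstone : st 1 = 1)
    (hstmul : ∀ x y, st (x * y) = st y * st x) (hstf : ∀ i p, st (ff A i p) = ff A i (-p)) :
    ∀ l : List (I × ℤ), st (fprod A l) = fprod A ((l.map fun p => (p.1, -p.2)).reverse)
  | [] => by simpa using hstone
  | x :: l => by
    rw [fprod_cons, hstmul, st_fprod A st hstone hstmul hstf l, hstf, List.map_cons,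
      List.reverse_cons, fprod_append]
    simp

lemma wtp_shift (x : I × ℤ) : wtp ((x.1, x.2 + 1) : I × ℤ) = -wtp x := by
  simp only [wtp]
  rw [← Finsupp.single_neg]
  congr 1
  rw [Int.negOnePow_succ]
  simp

lemma wtl_shift : ∀ l : List (I × ℤ), wtl (l.map fun p => (p.1, p.2 + 1)) = -wtl l
  | [] => by simp
  | x :: l => by
    rw [List.map_cons, wtl_cons, wtl_cons, wtl_shift l, wtp_shift]
    abel

lemma wtp_neg (x : I × ℤ) : wtp ((x.1, -x.2) : I × ℤ) = wtp x := by
  simp only [wtp]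
  congr 1
  have h : -x.2 + 1 = (x.2 + 1) + 2 * (-x.2) := by ring
  rw [h, Int.negOnePow_add, Int.negOnePow_two_mul, mul_one]

lemma wtl_negmap : ∀ l : List (I × ℤ), wtl (l.map fun p => (p.1, -p.2)) = wtl l
  | [] => rfl
  | x :: l => by rw [List.map_cons, wtl_cons, wtl_cons, wtl_negmap l, wtp_neg]

lemma wtl_reverse (l : List (I × ℤ)) : wtl l.reverse = wtl l := by
  unfold wtl
  rw [List.map_reverse, List.sum_reverse]

lemma Dm_hAwt (A : GCM I) (Dm : hA A ≃ₐ[𝕂] hA A)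
    (hD : ∀ i p, Dm (ff A i p) = ff A i (p + 1))
    {β : I →₀ ℤ} {x : hA A} (hx : x ∈ hAwt A β) : Dm x ∈ hAwt A (-β) := by
  rw [hAwt_eq] at hx ⊢
  induction hx using Submodule.span_induction with
  | mem a ha =>
    obtain ⟨l, hl, rfl⟩ := ha
    rw [Dm_fprod A Dm hD]
    exact Submodule.subset_span ⟨_, by rw [wtl_shift, hl], rfl⟩
  | zero => rw [map_zero]; exact zero_mem _
  | add a b _ _ ha hb => rw [map_add]; exact add_mem ha hb
  | smul c a _ ih => rw [map_smul]; exact Submodule.smul_mem _ _ ih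

lemma st_hAwt (A : GCM I) (st : hA A →ₗ[𝕂] hA A) (hstone : st 1 = 1)
    (hstmul : ∀ x y, st (x * y) = st y * st x) (hstf : ∀ i p, st (ff A i p) = ff A i (-p))
    {β : I →₀ ℤ} {x : hA A} (hx : x ∈ hAwt A β) : st x ∈ hAwt A β := by
  rw [hAwt_eq] at hx ⊢
  induction hx using Submodule.span_induction with
  | mem a ha =>
    obtain ⟨l, hl, rfl⟩ := ha
    rw [st_fprod A st hstone hstmul hstf]
    exact Submodule.subset_span ⟨_, by rw [wtl_reverse, wtl_negmap, hl], rfl⟩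
  | zero => rw [map_zero]; exact zero_mem _
  | add a b _ _ ha hb => rw [map_add]; exact add_mem ha hb
  | smul c a _ ih => rw [map_smul]; exact Submodule.smul_mem _ _ ih

lemma hAwt_mul (A : GCM I) {β γ : I →₀ ℤ} {x y : hA A}
    (hx : x ∈ hAwt A β) (hy : y ∈ hAwt A γ) : x * y ∈ hAwt A (β + γ) := by
  rw [hAwt_eq] at hx hy ⊢
  induction hx using Submodule.span_induction with
  | mem a ha =>
    induction hy using Submodule.span_induction with
    | mem b hb =>
      obtain ⟨l1, hl1, rfl⟩ := ha
      obtain ⟨l2, hl2, rfl⟩ := hb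
      refine Submodule.subset_span ⟨l1 ++ l2, ?_, (fprod_append A l1 l2).symm⟩
      rw [wtl_append, hl1, hl2]
    | zero => rw [mul_zero]; exact zero_mem _
    | add b c _ _ ihb ihc => rw [mul_add]; exact add_mem ihb ihc
    | smul c b _ ih => rw [mul_smul_comm]; exact Submodule.smul_mem _ _ ih
  | zero => rw [zero_mul]; exact zero_mem _
  | add a b _ _ iha ihb => rw [add_mul]; exact add_mem iha ihb
  | smul c a _ ih => rw [smul_mul_assoc]; exact Submodule.smul_mem _ _ ih

end S12

/-- `M(x^⋆) = M(𝒟̄(x)) = M(x)`; consequently the form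
`⟨⟨x,y⟩⟩ = M(x 𝒟̄(y))` satisfies `⟨⟨x,y⟩⟩ = ⟨⟨𝒟̄x, 𝒟̄y⟩⟩ = ⟨⟨y^⋆, x^⋆⟩⟩`, and
`⟨⟨x,y⟩⟩ = 0` for homogeneous `x, y` of different weights.
`M` is the projection characterized as before, `Dm` is the algebra automorphism `𝒟̄` with
`f_{i,p} ↦ f_{i,p+1}`, and `st` is the anti-automorphism `⋆` with `f_{i,p} ↦ f_{i,-p}`. -/
theorem statement12 (A : GCM I)
    (M : hA A →ₗ[𝕂] 𝕂)
    (hMone : M 1 = 1)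
    (hMzero : ∀ (m : ℤ) (β : I →₀ ℤ), β ≠ 0 → ∀ y, y ∈ hAk A m → y ∈ hAwt A β →
      ∀ u ∈ hAgt A m, ∀ v ∈ hAlt A m, M (u * y * v) = 0)
    (Dm : hA A ≃ₐ[𝕂] hA A)
    (hD : ∀ i p, Dm (ff A i p) = ff A i (p + 1))
    (st : hA A →ₗ[𝕂] hA A)
    (hstone : st 1 = 1)
    (hstmul : ∀ x y, st (x * y) = st y * st x)
    (hstf : ∀ i p, st (ff A i p) = ff A i (-p)) :
    (∀ x : hA A, M (st x) = M x ∧ M (Dm x) = M x) ∧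
    (∀ x y : hA A,
      M (x * Dm y) = M (Dm x * Dm (Dm y)) ∧
      M (x * Dm y) = M (st y * Dm (st x))) ∧
    (∀ (β γ : I →₀ ℤ) (x y : hA A), β ≠ γ → x ∈ hAwt A β → y ∈ hAwt A γ →
      M (x * Dm y) = 0) := by
  classical
  have hz_M : ∀ (N : ℤ) (l : List (I × ℤ)), S12.Dsc N l → l ≠ [] → M (S12.fprod A l) = 0 :=
    fun N l h hne => S12.M_desc_ne_nil A M hMzero l N h hne
  -- membership transfer under Dm
  have hDk : ∀ m : ℤ, ∀ y ∈ hAk A m, Dm y ∈ hAk A (m + 1) := by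
    intro m y hy
    refine S12.map_adjoin_mem A Dm (fun s hs => ?_) hy
    obtain ⟨i, k, h1, h2, rfl⟩ := hs
    rw [hD]
    exact Algebra.subset_adjoin ⟨i, k + 1, by omega, by omega, rfl⟩
  have hDge : ∀ m : ℤ, ∀ y ∈ hAge A m, Dm y ∈ hAge A (m + 1) := by
    intro m y hy
    refine S12.map_adjoin_mem A Dm (fun s hs => ?_) hy
    obtain ⟨i, k, h1, rfl⟩ := hs
    rw [hD]
    exact Algebra.subset_adjoin ⟨i, k + 1, by omega, rfl⟩
  have hDle : ∀ m : ℤ, ∀ y ∈ hAle A m, Dm y ∈ hAle A (m + 1) := by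
    intro m y hy
    refine S12.map_adjoin_mem A Dm (fun s hs => ?_) hy
    obtain ⟨i, k, h1, rfl⟩ := hs
    rw [hD]
    exact Algebra.subset_adjoin ⟨i, k + 1, by omega, rfl⟩
  -- membership transfer under st
  have hstk : ∀ m : ℤ, ∀ y ∈ hAk A m, st y ∈ hAk A (-m) := by
    intro m y hy
    refine S12.anti_adjoin_mem A st hstone hstmul (fun s hs => ?_) hy
    obtain ⟨i, k, h1, h2, rfl⟩ := hs
    rw [hstf]
    exact Algebra.subset_adjoin ⟨i, -k, by omega, by omega, rfl⟩
  have hstge : ∀ m : ℤ, ∀ y ∈ hAge A m, st y ∈ hAle A (-m) := by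
    intro m y hy
    refine S12.anti_adjoin_mem A st hstone hstmul (fun s hs => ?_) hy
    obtain ⟨i, k, h1, rfl⟩ := hs
    rw [hstf]
    exact Algebra.subset_adjoin ⟨i, -k, by omega, rfl⟩
  have hstle : ∀ m : ℤ, ∀ y ∈ hAle A m, st y ∈ hAge A (-m) := by
    intro m y hy
    refine S12.anti_adjoin_mem A st hstone hstmul (fun s hs => ?_) hy
    obtain ⟨i, k, h1, rfl⟩ := hs
    rw [hstf]
    exact Algebra.subset_adjoin ⟨i, -k, by omega, rfl⟩
  -- M ∘ Dm satisfies the defining properties of M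
  have hMzero_Dm : ∀ (m : ℤ) (β : I →₀ ℤ), β ≠ 0 → ∀ y, y ∈ hAk A m → y ∈ hAwt A β →
      ∀ u ∈ hAgt A m, ∀ v ∈ hAlt A m, M (Dm (u * y * v)) = 0 := by
    intro m β hβ y hyk hyw u hu v hv
    have h3 : Dm (u * y * v) = Dm u * Dm y * Dm v := by
      rw [map_mul, map_mul]
    rw [h3]
    refine hMzero (m + 1) (-β) (by simpa using hβ) (Dm y) (hDk m y hyk)
      (S12.Dm_hAwt A Dm hD hyw) (Dm u) (hDge (m + 1) u hu) (Dm v) ?_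
    have h := hDle (m - 1) v hv
    rwa [show m - 1 + 1 = m + 1 - 1 from by ring] at h
  have hMzero_st : ∀ (m : ℤ) (β : I →₀ ℤ), β ≠ 0 → ∀ y, y ∈ hAk A m → y ∈ hAwt A β →
      ∀ u ∈ hAgt A m, ∀ v ∈ hAlt A m, M (st (u * y * v)) = 0 := by
    intro m β hβ y hyk hyw u hu v hv
    have he : st (u * y * v) = st v * st y * st u := by
      rw [hstmul, hstmul, mul_assoc]
    rw [he]
    refine hMzero (-m) β hβ (st y) (hstk m y hyk)
      (S12.st_hAwt A st hstone hstmul hstf hyw) (st v) ?_ (st u) ?_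
    · have h := hstle (m - 1) v hv
      rwa [show -(m - 1) = -m + 1 from by ring] at h
    · have h := hstge (m + 1) u hu
      rwa [show -(m + 1) = -m - 1 from by ring] at h
  -- invariance of M
  have hst_eq : ∀ x, M (st x) = M x := by
    have h := S12.M_unique A (M ∘ₗ st) M
      (by rw [LinearMap.comp_apply, hstone, hMone]) hMone
      (fun N l hl hne => S12.M_desc_ne_nil A (M ∘ₗ st)
        (fun m β hβ y h1 h2 u hu v hv => hMzero_st m β hβ y h1 h2 u hu v hv) l N hl hne)
      hz_M
    exact fun x => h x
  have hDm_eq : ∀ x, M (Dm x) = M x := by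
    have h := S12.M_unique A (M ∘ₗ Dm.toLinearMap) M
      (by rw [LinearMap.comp_apply]; simp only [AlgEquiv.toLinearMap_apply, map_one]; exact hMone)
      hMone
      (fun N l hl hne => S12.M_desc_ne_nil A (M ∘ₗ Dm.toLinearMap)
        (fun m β hβ y h1 h2 u hu v hv => hMzero_Dm m β hβ y h1 h2 u hu v hv) l N hl hne)
      hz_M
    exact fun x => h x
  -- st ∘ Dm = Dm⁻¹ ∘ st
  have hsymm : ∀ (i : I) (p : ℤ), Dm.symm (ff A i p) = ff A i (p - 1) := by
    intro i p
    have h : Dm (ff A i (p - 1)) = ff A i p := by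
      rw [hD, show p - 1 + 1 = p from by ring]
    rw [← h, AlgEquiv.symm_apply_apply]
  have stD : ∀ z, st (Dm z) = Dm.symm (st z) := by
    have hword : ∀ l : List (I × ℤ), st (Dm (S12.fprod A l)) = Dm.symm (st (S12.fprod A l)) := by
      intro l
      induction l with
      | nil => rw [S12.fprod_nil, map_one, hstone, map_one]
      | cons x t ih =>
        calc st (Dm (S12.fprod A (x :: t)))
            = Dm.symm (st (S12.fprod A t)) * ff A x.1 (-(x.2 + 1)) := by
              rw [S12.fprod_cons, map_mul, hstmul, ih, hD, hstf]
          _ = Dm.symm (st (S12.fprod A t)) * ff A x.1 (-x.2 - 1) := by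
              rw [show -(x.2 + 1) = -x.2 - 1 from by ring]
          _ = Dm.symm (st (S12.fprod A (x :: t))) := by
              rw [S12.fprod_cons, hstmul, map_mul, hstf, hsymm]
    intro z
    have hzspan := S12.words_span A z
    induction hzspan using Submodule.span_induction with
    | mem a ha => obtain ⟨l, rfl⟩ := ha; exact hword l
    | zero => simp only [map_zero]
    | add a b _ _ iha ihb => simp only [map_add, iha, ihb]
    | smul c a _ ih => simp only [map_smul, ih]
  refine ⟨fun x => ⟨hst_eq x, hDm_eq x⟩, fun x y => ⟨?_, ?_⟩, ?_⟩
  · rw [← map_mul]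
    exact (hDm_eq _).symm
  · calc M (x * Dm y) = M (st (x * Dm y)) := (hst_eq _).symm
      _ = M (st (Dm y) * st x) := by rw [hstmul]
      _ = M (Dm.symm (st y) * st x) := by rw [stD]
      _ = M (Dm (Dm.symm (st y) * st x)) := (hDm_eq _).symm
      _ = M (st y * Dm (st x)) := by rw [map_mul, AlgEquiv.apply_symm_apply]
  · intro β γ x y hne hx hy
    have h1 : x * Dm y ∈ hAwt A (β + -γ) := S12.hAwt_mul A hx (S12.Dm_hAwt A Dm hD hy)
    refine S12.M_wt_zero A M hz_M (fun h0 => hne ?_) h1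
    have h2 : β - γ = 0 := by rw [sub_eq_add_neg]; exact h0
    exact sub_eq_zero.mp h2


end
end

section
/- Let m ∈ Z. For any homogeneous x, z ∈ Â_{≥m} and homogeneous y, w ∈ Â_{<m}, one has ⟨⟨xy, zw⟩⟩ = q^{(wt y, wt z)} ⟨⟨x,z⟩⟩ · ⟨⟨y,w⟩⟩. In particular ⟨⟨xy, w⟩⟩ = 0 when wt(x) ≠ 0. Moreover M(xy) = M(x)M(y) for any x ∈ Â_{≥m} and y ∈ Â_{≤m}. -/
/- Common setting: a symmetrizable generalized Cartan matrix, the field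
`𝕂 = ℚ(q^{1/2})` (with `sqv = q^{1/2}` and `q = qh = sqv²`), quantum integers, the bosonic
extension `hA A` presented by the `q`-Serre relations and the bosonic commutation
relations, its weight spaces and distinguished subalgebras, and the root-lattice
pairing. -/

set_option maxHeartbeats 1000000
set_option synthInstance.maxHeartbeats 400000

noncomputable section

variable {I : Type} [DecidableEq I]

namespace St13

variable {I : Type} [DecidableEq I]

/-- product of generators attached to a list of letters -/
def PP (A : GCM I) (l : List (I × ℤ)) : hA A := (l.map fun p => ff A p.1 p.2).prod

/-- formal weight of a list of letters -/
def Wt (l : List (I × ℤ)) : I →₀ ℤ :=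
  (l.map fun p => Finsupp.single p.1 (((p.2 + 1).negOnePow : ℤ))).sum

def shf (l : List (I × ℤ)) : List (I × ℤ) := l.map fun p => (p.1, p.2 + 1)

lemma PP_nil (A : GCM I) : PP A [] = 1 := rfl

lemma PP_cons (A : GCM I) (x : I × ℤ) (l : List (I × ℤ)) :
    PP A (x :: l) = ff A x.1 x.2 * PP A l := by
  simp [PP]

lemma PP_append (A : GCM I) (l₁ l₂ : List (I × ℤ)) :
    PP A (l₁ ++ l₂) = PP A l₁ * PP A l₂ := by
  simp [PP]

lemma Wt_nil : Wt ([] : List (I × ℤ)) = 0 := rfl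

lemma Wt_cons (x : I × ℤ) (l : List (I × ℤ)) :
    Wt (x :: l) = Finsupp.single x.1 (((x.2 + 1).negOnePow : ℤ)) + Wt l := by
  simp [Wt]

lemma Wt_append (l₁ l₂ : List (I × ℤ)) : Wt (l₁ ++ l₂) = Wt l₁ + Wt l₂ := by
  simp [Wt]

lemma Wt_perm {l₁ l₂ : List (I × ℤ)} (h : l₁.Perm l₂) : Wt l₁ = Wt l₂ :=
  List.Perm.sum_eq (h.map _)

lemma Wt_shf (l : List (I × ℤ)) : Wt (shf l) = -Wt l := by
  induction l with
  | nil => simp [Wt, shf]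
  | cons x t ih =>
    rw [show shf (x :: t) = (x.1, x.2 + 1) :: shf t from rfl, Wt_cons, Wt_cons, ih]
    have : ((x.2 + 1 + 1).negOnePow : ℤ) = -((x.2 + 1).negOnePow : ℤ) := by
      rw [Int.negOnePow_add]; simp
    rw [this]
    simp [Finsupp.single_neg]
    abel

/-- the defining commutation relation inside `hA` -/
lemma ff_comm (A : GCM I) (i j : I) (m p : ℤ) (h : m < p) :
    ff A i m * ff A j p =
      qh ^ (((p - m + 1).negOnePow : ℤ) * (A.d i * A.c i j)) • (ff A j p * ff A i m)
        + if j = i ∧ p = m + 1 then ((1 : 𝕂) - qd A i ^ 2) • 1 else 0 := by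
  have := RingQuot.mkAlgHom_rel 𝕂 (hARel.comm (A := A) i j m p h)
  simp only [map_add, map_mul, map_smul] at this
  rw [show (RingQuot.mkAlgHom 𝕂 (hARel A)) (FreeAlgebra.ι 𝕂 (i, m)) = ff A i m from rfl,
    show (RingQuot.mkAlgHom 𝕂 (hARel A)) (FreeAlgebra.ι 𝕂 (j, p)) = ff A j p from rfl] at this
  rw [this]
  congr 1
  split
  · simp
  · simp

end St13
namespace St13
set_option linter.unusedSectionVars false

variable {I : Type} [DecidableEq I]

/-- set of monomials whose letters all satisfy a predicate on the level -/
def monSet (A : GCM I) (pr : ℤ → Prop) : Set (hA A) :=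
  {x | ∃ l : List (I × ℤ), (∀ p ∈ l, pr p.2) ∧ x = PP A l}

lemma monSet_mul (A : GCM I) (pr : ℤ → Prop) :
    ∀ x ∈ monSet A pr, ∀ y ∈ monSet A pr, x * y ∈ monSet A pr := by
  rintro x ⟨l₁, h₁, rfl⟩ y ⟨l₂, h₂, rfl⟩
  exact ⟨l₁ ++ l₂, by
    intro p hp
    rcases List.mem_append.1 hp with h | h
    exacts [h₁ p h, h₂ p h], (PP_append A l₁ l₂).symm⟩

lemma one_mem_monSpan (A : GCM I) (pr : ℤ → Prop) :
    (1 : hA A) ∈ Submodule.span 𝕂 (monSet A pr) :=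
  Submodule.subset_span ⟨[], by simp, rfl⟩

lemma monSpan_mul (A : GCM I) (pr : ℤ → Prop) {x y : hA A}
    (hx : x ∈ Submodule.span 𝕂 (monSet A pr)) (hy : y ∈ Submodule.span 𝕂 (monSet A pr)) :
    x * y ∈ Submodule.span 𝕂 (monSet A pr) := by
  have h : Submodule.span 𝕂 (monSet A pr) * Submodule.span 𝕂 (monSet A pr)
      ≤ Submodule.span 𝕂 (monSet A pr) := by
    rw [Submodule.span_mul_span]
    refine Submodule.span_le.2 ?_
    rintro z ⟨a, ha, b, hb, rfl⟩
    exact Submodule.subset_span (monSet_mul A pr a ha b hb)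
  exact h (Submodule.mul_mem_mul hx hy)

/-- the span of monomials as a subalgebra -/
def monAlg (A : GCM I) (pr : ℤ → Prop) : Subalgebra 𝕂 (hA A) :=
  { Submodule.span 𝕂 (monSet A pr) with
    mul_mem' := fun hx hy => monSpan_mul A pr hx hy
    one_mem' := one_mem_monSpan A pr
    algebraMap_mem' := fun r => by
      have : (algebraMap 𝕂 (hA A)) r = r • 1 := by
        rw [Algebra.algebraMap_eq_smul_one]
      rw [this]
      exact Submodule.smul_mem _ _ (one_mem_monSpan A pr) }

lemma adjoin_le_monSpan (A : GCM I) (pr : ℤ → Prop) {x : hA A}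
    (hx : x ∈ Algebra.adjoin 𝕂 {x : hA A | ∃ i k, pr k ∧ x = ff A i k}) :
    x ∈ Submodule.span 𝕂 (monSet A pr) := by
  have : Algebra.adjoin 𝕂 {x : hA A | ∃ i k, pr k ∧ x = ff A i k} ≤ monAlg A pr := by
    refine Algebra.adjoin_le ?_
    rintro x ⟨i, k, hk, rfl⟩
    exact Submodule.subset_span ⟨[(i, k)], by simpa using hk, by simp [PP]⟩
  exact this hx

lemma hAge_le_monSpan (A : GCM I) (m : ℤ) {x : hA A} (hx : x ∈ hAge A m) :
    x ∈ Submodule.span 𝕂 (monSet A (fun k => m ≤ k)) := by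
  refine adjoin_le_monSpan A _ ?_
  have : {x : hA A | ∃ i k, m ≤ k ∧ x = ff A i k}
      = {x : hA A | ∃ i k, (fun k => m ≤ k) k ∧ x = ff A i k} := rfl
  exact this ▸ hx

lemma hAle_le_monSpan (A : GCM I) (m : ℤ) {x : hA A} (hx : x ∈ hAle A m) :
    x ∈ Submodule.span 𝕂 (monSet A (fun k => k ≤ m)) := by
  exact adjoin_le_monSpan A _ hx

/-- monomials with letters satisfying `pr` are in the corresponding adjoin -/
lemma PP_mem_adjoin (A : GCM I) (pr : ℤ → Prop) {S : Set (hA A)}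
    (hS : ∀ i k, pr k → ff A i k ∈ S) {l : List (I × ℤ)} (hl : ∀ p ∈ l, pr p.2) :
    PP A l ∈ Algebra.adjoin 𝕂 S := by
  induction l with
  | nil => exact one_mem _
  | cons x t ih =>
    rw [PP_cons]
    exact mul_mem (Algebra.subset_adjoin (hS x.1 x.2 (hl x (by simp))))
      (ih fun p hp => hl p (by simp [hp]))

lemma PP_mem_hAge (A : GCM I) (m : ℤ) {l : List (I × ℤ)} (hl : ∀ p ∈ l, m ≤ p.2) :
    PP A l ∈ hAge A m :=
  PP_mem_adjoin A (fun k => m ≤ k) (S := {x : hA A | ∃ i k, m ≤ k ∧ x = ff A i k})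
    (fun i k hk => ⟨i, k, hk, rfl⟩) hl

lemma PP_mem_hAle (A : GCM I) (m : ℤ) {l : List (I × ℤ)} (hl : ∀ p ∈ l, p.2 ≤ m) :
    PP A l ∈ hAle A m :=
  PP_mem_adjoin A (fun k => k ≤ m) (S := {x : hA A | ∃ i k, k ≤ m ∧ x = ff A i k})
    (fun i k hk => ⟨i, k, hk, rfl⟩) hl

lemma PP_mem_hAk (A : GCM I) (m : ℤ) {l : List (I × ℤ)} (hl : ∀ p ∈ l, p.2 = m) :
    PP A l ∈ hAk A m :=
  PP_mem_adjoin A (fun k => k = m) (S := {x : hA A | ∃ i k, m ≤ k ∧ k ≤ m ∧ x = ff A i k})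
    (fun i k hk => ⟨i, k, hk.ge, hk.le, rfl⟩) hl

lemma PP_mem_hAwt (A : GCM I) (l : List (I × ℤ)) : PP A l ∈ hAwt A (Wt l) :=
  Submodule.subset_span ⟨l, rfl, rfl⟩

lemma hAge_anti (A : GCM I) {m m' : ℤ} (h : m ≤ m') : hAge A m' ≤ hAge A m := by
  refine Algebra.adjoin_mono ?_
  rintro x ⟨i, k, hk, rfl⟩
  exact ⟨i, k, h.trans hk, rfl⟩

lemma hAle_mono (A : GCM I) {m m' : ℤ} (h : m ≤ m') : hAle A m ≤ hAle A m' := by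
  refine Algebra.adjoin_mono ?_
  rintro x ⟨i, k, hk, rfl⟩
  exact ⟨i, k, hk.trans h, rfl⟩

end St13
namespace St13
set_option linter.unusedSectionVars false

variable {I : Type} [DecidableEq I]

/-- the sortedness relation: non-increasing levels -/
def srt : (I × ℤ) → (I × ℤ) → Prop := fun p q => q.2 ≤ p.2

instance : IsTrans (I × ℤ) srt := ⟨fun _ _ _ h1 h2 => le_trans h2 h1⟩

/-- number of inversions -/
def inv : List (I × ℤ) → ℕ
  | [] => 0
  | x :: t => t.countP (fun y => decide (x.2 < y.2)) + inv t

lemma inv_le_sq : ∀ l : List (I × ℤ), inv l ≤ l.length * l.length := by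
  intro l
  induction l with
  | nil => simp [inv]
  | cons x t ih =>
    have h1 : (t.countP fun y => decide (x.2 < y.2)) ≤ t.length := List.countP_le_length
    simp only [inv, List.length_cons]
    nlinarith

lemma inv_cons (x : I × ℤ) (t : List (I × ℤ)) :
    inv (x :: t) = t.countP (fun y => decide (x.2 < y.2)) + inv t := rfl

lemma inv_append : ∀ l₁ r : List (I × ℤ),
    inv (l₁ ++ r) = inv l₁ + (l₁.map fun x => r.countP fun y => decide (x.2 < y.2)).sum + inv r := by
  intro l₁
  induction l₁ with
  | nil => simp [inv]
  | cons a t ih =>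
    intro r
    rw [List.cons_append, inv_cons, inv_cons, ih r, List.countP_append, List.map_cons,
      List.sum_cons]
    ring

lemma inv_swap (l₁ l₂ : List (I × ℤ)) (x y : I × ℤ) (h : x.2 < y.2) :
    inv (l₁ ++ x :: y :: l₂) = inv (l₁ ++ y :: x :: l₂) + 1 := by
  rw [inv_append, inv_append]
  have hcross : ∀ z : I × ℤ, ((x :: y :: l₂).countP fun w => decide (z.2 < w.2))
      = ((y :: x :: l₂).countP fun w => decide (z.2 < w.2)) := by
    intro z
    simp only [List.countP_cons]
    ring
  simp only [hcross]
  have h1 : inv (x :: y :: l₂) = inv (y :: x :: l₂) + 1 := by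
    simp only [inv, List.countP_cons]
    have hx : decide (x.2 < y.2) = true := by simpa using h
    have hy : decide (y.2 < x.2) = false := by simp; omega
    simp [hx, hy]
    ring
  omega

/-- generating set for the "normal ordering" span of a list -/
def NSset (A : GCM I) (l₀ : List (I × ℤ)) : Set (hA A) :=
  {x | ∃ l : List (I × ℤ), l.Pairwise srt ∧ x = PP A l ∧
    (↑l : Multiset (I × ℤ)) ≤ ↑l₀ ∧ Wt l = Wt l₀ ∧
    ((↑l : Multiset (I × ℤ)) = ↑l₀ ∨ l.length < l₀.length)}

def NS (A : GCM I) (l₀ : List (I × ℤ)) : Submodule 𝕂 (hA A) :=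
  Submodule.span 𝕂 (NSset A l₀)

lemma NS_le_of_perm (A : GCM I) {l₀ l₀' : List (I × ℤ)} (h : l₀.Perm l₀') :
    NS A l₀ ≤ NS A l₀' := by
  refine Submodule.span_mono ?_
  rintro x ⟨l, hp, rfl, hle, hw, hor⟩
  have hm : (↑l₀ : Multiset (I × ℤ)) = ↑l₀' := Quot.sound h
  exact ⟨l, hp, rfl, hm ▸ hle, hw.trans (Wt_perm h), by
    rcases hor with h1 | h1
    · exact Or.inl (hm ▸ h1)
    · exact Or.inr (h.length_eq ▸ h1)⟩

lemma NS_le_of_sub (A : GCM I) {la l₀ : List (I × ℤ)}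
    (hle : (↑la : Multiset (I × ℤ)) ≤ ↑l₀) (hw : Wt la = Wt l₀)
    (hlen : la.length + 2 ≤ l₀.length) : NS A la ≤ NS A l₀ := by
  refine Submodule.span_mono ?_
  rintro x ⟨l, hp, rfl, hle', hw', hor⟩
  refine ⟨l, hp, rfl, hle'.trans hle, hw'.trans hw, Or.inr ?_⟩
  rcases hor with h1 | h1
  · have : l.length = la.length := by
      have := congrArg Multiset.card h1
      simpa using this
    omega
  · omega

lemma chain_or_swap : ∀ l : List (I × ℤ), l.Chain' srt ∨
    ∃ l₁ x y l₂, l = l₁ ++ x :: y :: l₂ ∧ x.2 < y.2 := by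
  intro l
  induction l with
  | nil => exact Or.inl List.isChain_nil
  | cons a t ih =>
    match t, ih with
    | [], _ => exact Or.inl (List.isChain_singleton a)
    | b :: t', ih =>
      by_cases hab : b.2 ≤ a.2
      · rcases ih with hc | ⟨l₁, x, y, l₂, heq, hxy⟩
        · exact Or.inl (List.isChain_cons_cons.2 ⟨hab, hc⟩)
        · exact Or.inr ⟨a :: l₁, x, y, l₂, by rw [heq]; rfl, hxy⟩
      · exact Or.inr ⟨[], a, b, t', rfl, by omega⟩

lemma PP_swap (A : GCM I) (l₁ l₂ : List (I × ℤ)) (x y : I × ℤ) (h : x.2 < y.2) :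
    PP A (l₁ ++ x :: y :: l₂) =
      (qh ^ (((y.2 - x.2 + 1).negOnePow : ℤ) * (A.d x.1 * A.c x.1 y.1))) •
        PP A (l₁ ++ y :: x :: l₂) +
      (if y.1 = x.1 ∧ y.2 = x.2 + 1 then ((1 : 𝕂) - qd A x.1 ^ 2) • PP A (l₁ ++ l₂) else 0) := by
  simp only [PP_append, PP_cons]
  rw [show ff A x.1 x.2 * (ff A y.1 y.2 * PP A l₂)
      = (ff A x.1 x.2 * ff A y.1 y.2) * PP A l₂ by rw [mul_assoc],
    ff_comm A x.1 y.1 x.2 y.2 h]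
  split
  · simp only [add_mul, smul_mul_assoc, mul_add, mul_smul_comm, one_mul, mul_assoc]
  · simp only [add_zero, add_mul, smul_mul_assoc, mul_add, mul_smul_comm, mul_assoc,
      zero_mul, mul_zero]

lemma sort_mem (A : GCM I) : ∀ (n : ℕ) (l₀ : List (I × ℤ)),
    l₀.length ^ 3 + inv l₀ ≤ n → PP A l₀ ∈ NS A l₀ := by
  intro n
  induction n with
  | zero =>
    intro l₀ h
    have : l₀ = [] := by
      cases l₀ with
      | nil => rfl
      | cons a t => exfalso; have : (a :: t).length ^ 3 ≥ 1 := Nat.one_le_pow _ _ (by simp); omega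
    subst this
    exact Submodule.subset_span ⟨[], List.Pairwise.nil, rfl, le_refl _, rfl, Or.inl rfl⟩
  | succ n ih =>
    intro l₀ hrank
    rcases chain_or_swap l₀ with hc | ⟨l₁, x, y, l₂, heq, hxy⟩
    · exact Submodule.subset_span ⟨l₀, List.isChain_iff_pairwise.1 hc, rfl, le_refl _, rfl,
        Or.inl rfl⟩
    · subst heq
      rw [PP_swap A l₁ l₂ x y hxy]
      refine add_mem (Submodule.smul_mem _ _ ?_) ?_
      · -- swapped term
        have hperm : (l₁ ++ y :: x :: l₂).Perm (l₁ ++ x :: y :: l₂) :=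
          List.Perm.append_left l₁ (List.Perm.swap _ _ _)
        refine NS_le_of_perm A hperm (ih _ ?_)
        have hinv := inv_swap l₁ l₂ x y hxy
        have hlen : (l₁ ++ y :: x :: l₂).length ^ 3 = (l₁ ++ x :: y :: l₂).length ^ 3 := by simp
        omega
      · split
        · rename_i hcond
          refine Submodule.smul_mem _ _ ?_
          have hW : Wt (l₁ ++ l₂) = Wt (l₁ ++ x :: y :: l₂) := by
            rw [Wt_append, Wt_append, Wt_cons, Wt_cons, hcond.1, hcond.2]
            have : ((x.2 + 1 + 1).negOnePow : ℤ) = -((x.2 + 1).negOnePow : ℤ) := by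
              rw [Int.negOnePow_add]; simp
            rw [this, Finsupp.single_neg]
            abel
          have hsub : (↑(l₁ ++ l₂) : Multiset (I × ℤ)) ≤ ↑(l₁ ++ x :: y :: l₂) := by
            have hsl : List.Sublist (l₁ ++ l₂) (l₁ ++ x :: y :: l₂) :=
              List.Sublist.append_left
                ((List.sublist_cons_self y l₂).trans (List.sublist_cons_self x (y :: l₂))) l₁
            exact Multiset.coe_le.2 hsl.subperm
          refine NS_le_of_sub A hsub hW (by simp; omega) (ih _ ?_)
          -- rank estimate
          have h1 : inv (l₁ ++ l₂) ≤ (l₁ ++ l₂).length * (l₁ ++ l₂).length := inv_le_sq _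
          set k := (l₁ ++ l₂).length with hk
          have h2 : (l₁ ++ x :: y :: l₂).length = k + 2 := by rw [hk]; simp; omega
          rw [h2] at hrank
          have h3 : k ^ 3 + k * k < (k + 2) ^ 3 := by nlinarith
          omega
        · exact zero_mem _
  
end St13
namespace St13
set_option linter.unusedSectionVars false

variable {I : Type} [DecidableEq I]

lemma split_ge (m : ℤ) : ∀ l : List (I × ℤ), l.Pairwise srt → (∀ p ∈ l, m ≤ p.2) →
    ∃ u a : List (I × ℤ), l = u ++ a ∧ (∀ p ∈ u, m + 1 ≤ p.2) ∧ (∀ p ∈ a, p.2 = m) := by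
  intro l
  induction l with
  | nil => exact fun _ _ => ⟨[], [], rfl, by simp, by simp⟩
  | cons x t ih =>
    intro hp hge
    have hx : ∀ p ∈ t, p.2 ≤ x.2 := fun p hp' => List.rel_of_pairwise_cons hp hp'
    have ht : t.Pairwise srt := hp.of_cons
    by_cases hxm : m + 1 ≤ x.2
    · obtain ⟨u, a, heq, hu, ha⟩ := ih ht fun p hp' => hge p (by simp [hp'])
      exact ⟨x :: u, a, by rw [heq]; rfl, by
        intro p hp'
        rcases List.mem_cons.1 hp' with h | h
        · subst h; exact hxm
        · exact hu p h, ha⟩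
    · have hxe : x.2 = m := by have := hge x (by simp); omega
      exact ⟨[], x :: t, rfl, by simp, by
        intro p hp'
        rcases List.mem_cons.1 hp' with h | h
        · subst h; exact hxe
        · have := hx p h; have := hge p (by simp [h]); omega⟩

lemma split_le (m : ℤ) : ∀ l : List (I × ℤ), l.Pairwise srt → (∀ p ∈ l, p.2 ≤ m) →
    ∃ a v : List (I × ℤ), l = a ++ v ∧ (∀ p ∈ a, p.2 = m) ∧ (∀ p ∈ v, p.2 ≤ m - 1) := by
  intro l
  induction l with
  | nil => exact fun _ _ => ⟨[], [], rfl, by simp, by simp⟩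
  | cons x t ih =>
    intro hp hle
    have hx : ∀ p ∈ t, p.2 ≤ x.2 := fun p hp' => List.rel_of_pairwise_cons hp hp'
    have ht : t.Pairwise srt := hp.of_cons
    by_cases hxm : x.2 = m
    · obtain ⟨a, v, heq, ha, hv⟩ := ih ht fun p hp' => hle p (by simp [hp'])
      exact ⟨x :: a, v, by rw [heq]; rfl, by
        intro p hp'
        rcases List.mem_cons.1 hp' with h | h
        · subst h; exact hxm
        · exact ha p h, hv⟩
    · have hxl : x.2 ≤ m - 1 := by have := hle x (by simp); omega
      exact ⟨[], x :: t, rfl, by simp, by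
        intro p hp'
        rcases List.mem_cons.1 hp' with h | h
        · subst h; exact hxl
        · have := hx p h; omega⟩

/-- sum-of-coordinates functional -/
def Tf (β : I →₀ ℤ) : ℤ := β.sum fun _ v => v

lemma Tf_zero : Tf (0 : I →₀ ℤ) = 0 := by simp [Tf]

lemma Tf_add (β γ : I →₀ ℤ) : Tf (β + γ) = Tf β + Tf γ := by
  simp [Tf, Finsupp.sum_add_index']

lemma Tf_single (i : I) (a : ℤ) : Tf (Finsupp.single i a) = a := by
  simp [Tf, Finsupp.sum_single_index]

lemma Tf_Wt_level (m : ℤ) : ∀ a : List (I × ℤ), (∀ p ∈ a, p.2 = m) →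
    Tf (Wt a) = a.length * ((m + 1).negOnePow : ℤ) := by
  intro a
  induction a with
  | nil => simp [Wt_nil, Tf_zero]
  | cons x t ih =>
    intro h
    rw [Wt_cons, Tf_add, Tf_single, ih fun p hp => h p (by simp [hp]), h x (by simp)]
    simp only [List.length_cons]
    push_cast
    ring

lemma Wt_level_ne_zero {m : ℤ} {a : List (I × ℤ)} (hne : a ≠ [])
    (h : ∀ p ∈ a, p.2 = m) : Wt a ≠ 0 := by
  intro h0
  have := Tf_Wt_level m a h
  rw [h0, Tf_zero] at this
  have h1 : ((m + 1).negOnePow : ℤ) = 1 ∨ ((m + 1).negOnePow : ℤ) = -1 := by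
    rcases Int.units_eq_one_or ((m + 1).negOnePow) with h | h <;>
      [left; right] <;> rw [h] <;> rfl
  have h2 : (a.length : ℤ) ≠ 0 := by
    simp only [ne_eq, Nat.cast_eq_zero, List.length_eq_zero_iff]
    exact hne
  rcases h1 with h1 | h1 <;> rw [h1] at this <;> omega

lemma exists_min : ∀ l : List (I × ℤ), l ≠ [] →
    ∃ m : ℤ, (∀ p ∈ l, m ≤ p.2) ∧ ∃ p ∈ l, p.2 = m := by
  intro l
  induction l with
  | nil => exact fun h => absurd rfl h
  | cons x t ih =>
    intro _
    by_cases ht : t = []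
    · subst ht
      exact ⟨x.2, by simp, x, by simp⟩
    · obtain ⟨m, hm, p, hp, hpm⟩ := ih ht
      by_cases hc : m ≤ x.2
      · exact ⟨m, by
          intro p' hp'
          rcases List.mem_cons.1 hp' with h | h
          · subst h; exact hc
          · exact hm p' h, p, by simp [hp], hpm⟩
      · exact ⟨x.2, by
          intro p' hp'
          rcases List.mem_cons.1 hp' with h | h
          · subst h; exact le_refl _
          · have := hm p' h; omega, x, by simp⟩

end St13
namespace St13
set_option linter.unusedSectionVars false

variable {I : Type} [DecidableEq I]

section withM

variable (A : GCM I) (M : hA A →ₗ[𝕂] 𝕂)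
variable (hMzero : ∀ (m : ℤ) (β : I →₀ ℤ), β ≠ 0 → ∀ y, y ∈ hAk A m → y ∈ hAwt A β →
      ∀ u ∈ hAgt A m, ∀ v ∈ hAlt A m, M (u * y * v) = 0)

include hMzero

lemma M_PP_zero : ∀ (n : ℕ) (l : List (I × ℤ)), l.length ≤ n → Wt l ≠ 0 → M (PP A l) = 0 := by
  intro n
  induction n with
  | zero =>
    intro l hl hW
    rw [List.length_eq_zero_iff.1 (Nat.le_zero.1 hl)] at hW
    exact absurd Wt_nil hW
  | succ n ih =>
    intro l hl hW
    have hne : l ≠ [] := by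
      intro h; subst h; exact hW Wt_nil
    obtain ⟨m, hmin, pw, hpw, hpwm⟩ := exists_min l hne
    have hmem := sort_mem A (l.length ^ 3 + inv l) l (le_refl _)
    have hker : NS A l ≤ LinearMap.ker M := by
      refine Submodule.span_le.2 ?_
      rintro x ⟨l'', hpair, rfl, hle, hw, hor⟩
      have hge : ∀ p ∈ l'', m ≤ p.2 := by
        intro p hp
        exact hmin p (Multiset.mem_coe.1 (Multiset.mem_of_le hle (Multiset.mem_coe.2 hp)))
      obtain ⟨u, a, heq, hu, ha⟩ := split_ge m l'' hpair hge
      subst heq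
      simp only [SetLike.mem_coe, LinearMap.mem_ker]
      by_cases hane : a = []
      · subst hane
        rcases hor with h1 | h1
        · exfalso
          have : pw ∈ u ++ ([] : List (I × ℤ)) := by
            have h2 : pw ∈ (↑(u ++ ([] : List (I × ℤ))) : Multiset (I × ℤ)) := by
              rw [h1]; exact Multiset.mem_coe.2 hpw
            exact Multiset.mem_coe.1 h2
          rw [List.append_nil] at this
          have := hu pw this
          omega
        · refine ih (u ++ []) (by simp at h1 ⊢; omega) ?_
          rw [hw]; exact hW
      · have h0 : M (PP A u * PP A a * 1) = 0 :=
          hMzero m (Wt a) (Wt_level_ne_zero hane ha) (PP A a) (PP_mem_hAk A m ha)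
            (PP_mem_hAwt A a) (PP A u) (PP_mem_hAge A (m + 1) hu) 1 (one_mem _)
        rw [mul_one] at h0
        rw [PP_append]
        exact h0
    exact LinearMap.mem_ker.1 (hker hmem)

lemma M_wt_zero {β : I →₀ ℤ} (hβ : β ≠ 0) {x : hA A} (hx : x ∈ hAwt A β) : M x = 0 := by
  have : hAwt A β ≤ LinearMap.ker M := by
    refine Submodule.span_le.2 ?_
    rintro x ⟨l, hW, rfl⟩
    simp only [SetLike.mem_coe, LinearMap.mem_ker]
    exact M_PP_zero A M hMzero l.length l (le_refl _) (by rw [show Wt l = β from hW]; exact hβ)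
  exact LinearMap.mem_ker.1 (this hx)

end withM
end St13
namespace St13
set_option linter.unusedSectionVars false

variable {I : Type} [DecidableEq I]

/-- termination measure for the multiplicativity induction -/
def mu (m : ℤ) (lx ly : List (I × ℤ)) : ℕ :=
  (lx.map fun p => (p.2 - m).toNat).sum + lx.length + ly.length

lemma map_sum_shift {m : ℤ} : ∀ {u : List (I × ℤ)}, (∀ p ∈ u, m + 1 ≤ p.2) →
    (u.map fun p => (p.2 - (m + 1)).toNat).sum + u.length
      = (u.map fun p => (p.2 - m).toNat).sum := by
  intro u
  induction u with
  | nil => simp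
  | cons x t ih =>
    intro h
    have hx := h x (by simp)
    have ht := ih fun p hp => h p (by simp [hp])
    simp only [List.map_cons, List.sum_cons, List.length_cons]
    omega

lemma map_sum_le_of_multiset_le {u lx : List (I × ℤ)} {f : I × ℤ → ℕ}
    (h : (↑u : Multiset (I × ℤ)) ≤ ↑lx) : (u.map f).sum ≤ (lx.map f).sum := by
  obtain ⟨w, hw⟩ := Multiset.le_iff_exists_add.1 h
  have : ((↑lx : Multiset (I × ℤ)).map f).sum = ((↑u : Multiset (I × ℤ)).map f).sum
      + (w.map f).sum := by rw [hw, Multiset.map_add, Multiset.sum_add]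
  simp only [Multiset.map_coe, Multiset.sum_coe] at this
  omega

section withM

variable (A : GCM I) (M : hA A →ₗ[𝕂] 𝕂) (hMone : M 1 = 1)
variable (hMzero : ∀ (m : ℤ) (β : I →₀ ℤ), β ≠ 0 → ∀ y, y ∈ hAk A m → y ∈ hAwt A β →
      ∀ u ∈ hAgt A m, ∀ v ∈ hAlt A m, M (u * y * v) = 0)

include hMone hMzero

lemma G3mono : ∀ (n : ℕ) (m : ℤ) (lx ly : List (I × ℤ)), (∀ p ∈ lx, m ≤ p.2) →
    (∀ p ∈ ly, p.2 ≤ m) → mu m lx ly ≤ n →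
    M (PP A lx * PP A ly) = M (PP A lx) * M (PP A ly) := by
  intro n
  induction n with
  | zero =>
    intro m lx ly _ _ hmu
    unfold mu at hmu
    have hx : lx = [] := List.length_eq_zero_iff.1 (by omega)
    have hy : ly = [] := List.length_eq_zero_iff.1 (by omega)
    subst hx; subst hy
    rw [PP_nil, one_mul, hMone, one_mul]
  | succ n ih =>
    intro m lx ly hlx hly hmu
    -- main claim over the normal-ordering spans
    have key : ∀ X, X ∈ NS A lx → ∀ Y, Y ∈ NS A ly → M (X * Y) = M X * M Y := by
      intro X hX
      refine Submodule.span_induction ?_ ?_ ?_ ?_ hX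
      · rintro X ⟨l₁, hp₁, rfl, hle₁, hw₁, hor₁⟩
        intro Y hY
        refine Submodule.span_induction ?_ ?_ ?_ ?_ hY
        · rintro Y ⟨l₂, hp₂, rfl, hle₂, hw₂, hor₂⟩
          -- the core computation
          have hge₁ : ∀ p ∈ l₁, m ≤ p.2 := fun p hp =>
            hlx p (Multiset.mem_coe.1 (Multiset.mem_of_le hle₁ (Multiset.mem_coe.2 hp)))
          have hle₂' : ∀ p ∈ l₂, p.2 ≤ m := fun p hp =>
            hly p (Multiset.mem_coe.1 (Multiset.mem_of_le hle₂ (Multiset.mem_coe.2 hp)))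
          obtain ⟨u, a, heq₁, hu, ha⟩ := split_ge m l₁ hp₁ hge₁
          obtain ⟨b, v, heq₂, hb, hv⟩ := split_le m l₂ hp₂ hle₂'
          subst heq₁; subst heq₂
          by_cases hane : a = []
          · by_cases hbne : b = []
            · -- both middle blocks empty
              subst hane; subst hbne
              rw [List.append_nil] at *
              rw [List.nil_append] at *
              by_cases hune : u = []
              · subst hune
                rw [PP_nil, one_mul, hMone, one_mul]
              · -- recurse at level m+1
                have hv' : ∀ p ∈ v, p.2 ≤ m + 1 := fun p hp => by
                  have := hv p hp; omega
                have harith : mu (m + 1) u v ≤ n := by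
                  have h1 : (u.map fun p => (p.2 - (m + 1)).toNat).sum + u.length
                      = (u.map fun p => (p.2 - m).toNat).sum := map_sum_shift hu
                  have h2 : (u.map fun p => (p.2 - m).toNat).sum
                      ≤ (lx.map fun p => (p.2 - m).toNat).sum := map_sum_le_of_multiset_le hle₁
                  have h3 : u.length ≤ lx.length := by
                    have := Multiset.card_le_card hle₁; simpa using this
                  have h4 : v.length ≤ ly.length := by
                    have := Multiset.card_le_card hle₂; simpa using this
                  have h5 : 1 ≤ u.length := by
                    cases u with
                    | nil => exact absurd rfl hune
                    | cons _ _ => simp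
                  simp only [mu] at hmu ⊢
                  omega
                exact ih (m + 1) u v hu hv' harith
            · -- b nonempty : both sides vanish
              subst hane
              rw [List.append_nil] at *
              have h0 : M (PP A u * PP A b * PP A v) = 0 :=
                hMzero m (Wt b) (Wt_level_ne_zero hbne hb) (PP A b) (PP_mem_hAk A m hb)
                  (PP_mem_hAwt A b) (PP A u) (PP_mem_hAge A (m + 1) hu) (PP A v)
                  (PP_mem_hAle A (m - 1) hv)
              have h1 : M (PP A (b ++ v)) = 0 := by
                have := hMzero m (Wt b) (Wt_level_ne_zero hbne hb) (PP A b)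
                  (PP_mem_hAk A m hb) (PP_mem_hAwt A b) 1 (one_mem _) (PP A v)
                  (PP_mem_hAle A (m - 1) hv)
                rw [one_mul] at this
                rw [PP_append]
                exact this
              rw [h1, mul_zero, PP_append, ← mul_assoc, h0]
          · -- a nonempty : both sides vanish
            have hmid : ∀ p ∈ a ++ b, p.2 = m := by
              intro p hp
              rcases List.mem_append.1 hp with h | h
              exacts [ha p h, hb p h]
            have hmidne : a ++ b ≠ [] := fun h => hane (List.append_eq_nil_iff.1 h).1
            have h0 : M (PP A u * PP A (a ++ b) * PP A v) = 0 :=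
              hMzero m (Wt (a ++ b)) (Wt_level_ne_zero hmidne hmid) (PP A (a ++ b))
                (PP_mem_hAk A m hmid) (PP_mem_hAwt A (a ++ b)) (PP A u)
                (PP_mem_hAge A (m + 1) hu) (PP A v) (PP_mem_hAle A (m - 1) hv)
            have h1 : M (PP A (u ++ a)) = 0 := by
              have := hMzero m (Wt a) (Wt_level_ne_zero hane ha) (PP A a)
                (PP_mem_hAk A m ha) (PP_mem_hAwt A a) (PP A u)
                (PP_mem_hAge A (m + 1) hu) 1 (one_mem _)
              rw [mul_one] at this
              rw [PP_append]
              exact this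
            rw [h1, zero_mul]
            have : PP A (u ++ a) * PP A (b ++ v)
                = PP A u * PP A (a ++ b) * PP A v := by
              simp only [PP_append, mul_assoc]
            rw [this, h0]
        · simp
        · intro Y₁ Y₂ _ _ e₁ e₂
          rw [mul_add, map_add, map_add, e₁, e₂, mul_add]
        · intro c Y _ e
          rw [mul_smul_comm, map_smul, map_smul, e, smul_eq_mul, smul_eq_mul]
          ring
      · intro Y _; simp
      · intro X₁ X₂ _ _ e₁ e₂ Y hY
        rw [add_mul, map_add, map_add, e₁ Y hY, e₂ Y hY, add_mul]
      · intro c X _ e Y hY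
        rw [smul_mul_assoc, map_smul, map_smul, e Y hY, smul_eq_mul, smul_eq_mul]
        ring
    exact key _ (sort_mem A _ lx (le_refl _)) _ (sort_mem A _ ly (le_refl _))

/-- multiplicativity of M -/
lemma G3 (m : ℤ) {x y : hA A} (hx : x ∈ hAge A m) (hy : y ∈ hAle A m) :
    M (x * y) = M x * M y := by
  have hx' := hAge_le_monSpan A m hx
  have hy' := hAle_le_monSpan A m hy
  clear hx hy
  induction hx' using Submodule.span_induction with
  | zero => simp
  | add X₁ X₂ _ _ e₁ e₂ => rw [add_mul, map_add, map_add, add_mul, e₁, e₂]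
  | smul c X _ e =>
    rw [smul_mul_assoc, map_smul, map_smul, e, smul_eq_mul, smul_eq_mul]; ring
  | mem X hX =>
    obtain ⟨lx, hlx, rfl⟩ := hX
    induction hy' using Submodule.span_induction with
    | zero => simp
    | add Y₁ Y₂ _ _ e₁ e₂ => rw [mul_add, map_add, map_add, mul_add, e₁, e₂]
    | smul c Y _ e =>
      rw [mul_smul_comm, map_smul, map_smul, e, smul_eq_mul, smul_eq_mul]; ring
    | mem Y hY =>
      obtain ⟨ly, hly, rfl⟩ := hY
      exact G3mono A M hMone hMzero (mu m lx ly) m lx ly hlx hly (le_refl _)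

end withM
end St13
namespace St13
set_option linter.unusedSectionVars false

variable {I : Type} [DecidableEq I]

lemma qh_ne_zero : (qh : 𝕂) ≠ 0 := by
  simp only [qh, sqv]
  exact pow_ne_zero _ RatFunc.X_ne_zero

/-- pairwise commutation exponent -/
def ee (A : GCM I) (x y : I × ℤ) : ℤ :=
  ((y.2 - x.2 + 1).negOnePow : ℤ) * (A.d x.1 * A.c x.1 y.1)

lemma ff_swap (A : GCM I) (x y : I × ℤ) (h : x.2 + 2 ≤ y.2) :
    ff A x.1 x.2 * ff A y.1 y.2 = qh ^ ee A x y • (ff A y.1 y.2 * ff A x.1 x.2) := by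
  have := ff_comm A x.1 y.1 x.2 y.2 (by omega)
  rw [if_neg (by rintro ⟨_, h2⟩; omega)] at this
  rw [add_zero] at this
  exact this

lemma comm_one (A : GCM I) (x : I × ℤ) : ∀ lz : List (I × ℤ), (∀ p ∈ lz, x.2 + 2 ≤ p.2) →
    ff A x.1 x.2 * PP A lz = qh ^ ((lz.map fun y => ee A x y).sum) • (PP A lz * ff A x.1 x.2) := by
  intro lz
  induction lz with
  | nil => simp [PP_nil]
  | cons y t ih =>
    intro h
    have hy := h y (by simp)
    have ht := ih fun p hp => h p (by simp [hp])
    rw [PP_cons, show ff A x.1 x.2 * (ff A y.1 y.2 * PP A t)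
        = (ff A x.1 x.2 * ff A y.1 y.2) * PP A t from by rw [mul_assoc],
      ff_swap A x y hy, smul_mul_assoc, mul_assoc, ht, mul_smul_comm, smul_smul,
      List.map_cons, List.sum_cons]
    congr 1
    · rw [zpow_add₀ qh_ne_zero]
    · simp only [mul_assoc]

lemma comm_lists (A : GCM I) : ∀ ly lz : List (I × ℤ),
    (∀ p ∈ ly, ∀ q ∈ lz, p.2 + 2 ≤ q.2) →
    PP A ly * PP A lz = qh ^ ((ly.map fun x => (lz.map fun y => ee A x y).sum).sum) •
      (PP A lz * PP A ly) := by
  intro ly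
  induction ly with
  | nil => simp [PP_nil]
  | cons x t ih =>
    intro lz h
    have hx := comm_one A x lz (h x (by simp))
    have ht := ih lz fun p hp => h p (by simp [hp])
    rw [PP_cons, mul_assoc, ht, mul_smul_comm, ← mul_assoc, hx, smul_mul_assoc, smul_smul,
      List.map_cons, List.sum_cons]
    congr 1
    · rw [zpow_add₀ qh_ne_zero, mul_comm]
    · simp only [mul_assoc]

/- bilinearity of ip -/
lemma ip_zero_left (A : GCM I) (γ : I →₀ ℤ) : ip A 0 γ = 0 := by
  simp [ip]

lemma ip_zero_right (A : GCM I) (β : I →₀ ℤ) : ip A β 0 = 0 := by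
  simp [ip]

lemma ip_add_left (A : GCM I) (β₁ β₂ γ : I →₀ ℤ) :
    ip A (β₁ + β₂) γ = ip A β₁ γ + ip A β₂ γ := by
  unfold ip
  rw [Finsupp.sum_add_index']
  · intro i
    simp
  · intro i a₁ a₂
    rw [← Finsupp.sum_add]
    congr 1
    ext j b
    ring

lemma ip_add_right (A : GCM I) (β γ₁ γ₂ : I →₀ ℤ) :
    ip A β (γ₁ + γ₂) = ip A β γ₁ + ip A β γ₂ := by
  unfold ip
  rw [← Finsupp.sum_add]
  congr 1
  ext i a
  rw [Finsupp.sum_add_index']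
  · intro j; simp
  · intro j b₁ b₂; ring

lemma ip_single_single (A : GCM I) (i j : I) (a b : ℤ) :
    ip A (Finsupp.single i a) (Finsupp.single j b) = a * b * (A.d i * A.c i j) := by
  unfold ip
  rw [Finsupp.sum_single_index, Finsupp.sum_single_index]
  · ring
  · rw [Finsupp.sum_single_index] <;> ring

lemma negOnePow_combine (a b : ℤ) :
    ((b + 1 - a + 1).negOnePow : ℤ) = ((a + 1).negOnePow : ℤ) * ((b + 1).negOnePow : ℤ) := by
  have h : b + 1 - a + 1 = (b + 1) - (a + 1) + 2 := by ring
  rw [h, Int.negOnePow_add, Int.negOnePow_sub]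
  have h2 : ((2 : ℤ).negOnePow : ℤ) = 1 := by decide
  push_cast [h2]
  ring

lemma ee_single (A : GCM I) (x : I × ℤ) : ∀ lz : List (I × ℤ),
    ((shf lz).map fun y => ee A x y).sum
      = ip A (Finsupp.single x.1 (((x.2 + 1).negOnePow : ℤ))) (Wt lz) := by
  intro lz
  induction lz with
  | nil => simp [shf, Wt_nil, ip_zero_right]
  | cons y t ih =>
    rw [show shf (y :: t) = (y.1, y.2 + 1) :: shf t from rfl, List.map_cons, List.sum_cons,
      Wt_cons, ip_add_right, ih, ip_single_single]
    congr 1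
    unfold ee
    simp only
    rw [negOnePow_combine x.2 y.2]
    try ring

lemma EE_eq_ip (A : GCM I) : ∀ ly lz : List (I × ℤ),
    (ly.map fun x => ((shf lz).map fun y => ee A x y).sum).sum = ip A (Wt ly) (Wt lz) := by
  intro ly
  induction ly with
  | nil => intro lz; simp [Wt_nil, ip_zero_left]
  | cons x t ih =>
    intro lz
    rw [List.map_cons, List.sum_cons, Wt_cons, ip_add_left, ih lz, ee_single A x lz]

section withD

variable (A : GCM I) (Dm : hA A ≃ₐ[𝕂] hA A) (hD : ∀ i p, Dm (ff A i p) = ff A i (p + 1))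

include hD

lemma Dm_PP : ∀ l : List (I × ℤ), Dm (PP A l) = PP A (shf l) := by
  intro l
  induction l with
  | nil => rw [show shf ([] : List (I × ℤ)) = [] from rfl, PP_nil, map_one]
  | cons x t ih =>
    rw [PP_cons, map_mul, hD, ih]
    rfl

lemma Dm_mem_hAle {w : hA A} {m : ℤ} (hw : w ∈ hAle A m) : Dm w ∈ hAle A (m + 1) := by
  have hw' := hAle_le_monSpan A m hw
  clear hw
  induction hw' using Submodule.span_induction with
  | zero => rw [map_zero]; exact zero_mem _
  | add X Y _ _ e₁ e₂ => rw [map_add]; exact add_mem e₁ e₂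
  | smul c X _ e =>
    rw [show Dm (c • X) = c • Dm X from map_smul Dm c X]
    exact Subalgebra.smul_mem _ e c
  | mem X hX =>
    obtain ⟨l, hl, rfl⟩ := hX
    rw [Dm_PP A Dm hD]
    refine PP_mem_hAle A (m + 1) ?_
    rintro p hp
    obtain ⟨q, hq, rfl⟩ := List.mem_map.1 hp
    have := hl q hq
    simp only
    omega

lemma Dm_mem_hAge {z : hA A} {m : ℤ} (hz : z ∈ hAge A m) : Dm z ∈ hAge A (m + 1) := by
  have hz' := hAge_le_monSpan A m hz
  clear hz
  induction hz' using Submodule.span_induction with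
  | zero => rw [map_zero]; exact zero_mem _
  | add X Y _ _ e₁ e₂ => rw [map_add]; exact add_mem e₁ e₂
  | smul c X _ e =>
    rw [show Dm (c • X) = c • Dm X from map_smul Dm c X]
    exact Subalgebra.smul_mem _ e c
  | mem X hX =>
    obtain ⟨l, hl, rfl⟩ := hX
    rw [Dm_PP A Dm hD]
    refine PP_mem_hAge A (m + 1) ?_
    rintro p hp
    obtain ⟨q, hq, rfl⟩ := List.mem_map.1 hp
    have := hl q hq
    simp only
    omega

end withD
end St13
namespace St13
set_option linter.unusedSectionVars false

variable {I : Type} [DecidableEq I]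

section final

variable (A : GCM I) (M : hA A →ₗ[𝕂] 𝕂) (hMone : M 1 = 1)
variable (hMzero : ∀ (m : ℤ) (β : I →₀ ℤ), β ≠ 0 → ∀ y, y ∈ hAk A m → y ∈ hAwt A β →
      ∀ u ∈ hAgt A m, ∀ v ∈ hAlt A m, M (u * y * v) = 0)
variable (Dm : hA A ≃ₐ[𝕂] hA A) (hD : ∀ i p, Dm (ff A i p) = ff A i (p + 1))

include hMzero hD

lemma M_cross_zero {β₁ β₂ : I →₀ ℤ} (hne : β₁ ≠ β₂) {a b : hA A}
    (ha : a ∈ hAwt A β₁) (hb : b ∈ hAwt A β₂) : M (a * Dm b) = 0 := by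
  induction ha using Submodule.span_induction with
  | zero => rw [zero_mul, map_zero]
  | add X Y _ _ e₁ e₂ => rw [add_mul, map_add, e₁, e₂, add_zero]
  | smul c X _ e => rw [smul_mul_assoc, map_smul, e, smul_zero]
  | mem a hgen =>
    obtain ⟨l₁, hW₁, rfl⟩ := hgen
    induction hb using Submodule.span_induction with
    | zero => rw [map_zero, mul_zero, map_zero]
    | add X Y _ _ e₁ e₂ => rw [map_add, mul_add, map_add, e₁, e₂, add_zero]
    | smul c X _ e =>
      rw [show Dm (c • X) = c • Dm X from map_smul Dm c X, mul_smul_comm, map_smul, e,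
        smul_zero]
    | mem b hgen₂ =>
      obtain ⟨l₂, hW₂, rfl⟩ := hgen₂
      show M (PP A l₁ * Dm (PP A l₂)) = 0
      rw [Dm_PP A Dm hD, ← PP_append]
      refine M_PP_zero A M hMzero (l₁ ++ shf l₂).length _ (le_refl _) ?_
      rw [Wt_append, Wt_shf, show Wt l₁ = β₁ from hW₁, show Wt l₂ = β₂ from hW₂,
        ← sub_eq_add_neg]
      exact sub_ne_zero_of_ne hne

include hMone

lemma G1 (m : ℤ) (β γ δ ε : I →₀ ℤ) (x y z w : hA A)
    (hxg : x ∈ hAge A m) (hxw : x ∈ hAwt A β) (hzg : z ∈ hAge A m) (hzw : z ∈ hAwt A δ)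
    (hyl : y ∈ hAlt A m) (hyw : y ∈ hAwt A γ) (hwl : w ∈ hAlt A m) (hww : w ∈ hAwt A ε) :
    M ((x * y) * Dm (z * w)) = qh ^ ip A γ δ * (M (x * Dm z) * M (y * Dm w)) := by
  have hDw_le : Dm w ∈ hAle A m := by
    have h1 : Dm w ∈ hAle A (m - 1 + 1) := Dm_mem_hAle A Dm hD hwl
    exact hAle_mono A (by omega) h1
  have key : M ((x * y) * Dm (z * w)) = qh ^ ip A ε β * (M (x * Dm z) * M (y * Dm w)) := by
    rw [show Dm (z * w) = Dm z * Dm w from map_mul Dm z w]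
    have hy' := hAle_le_monSpan A (m - 1) hyl
    have hz' := hAge_le_monSpan A m hzg
    clear hyl hzg hyw hzw
    induction hy' using Submodule.span_induction with
    | zero => simp
    | add Y₁ Y₂ _ _ e₁ e₂ =>
      rw [mul_add, add_mul, map_add, add_mul, map_add, e₁, e₂]
      ring
    | smul c Y _ e =>
      rw [mul_smul_comm, smul_mul_assoc, map_smul, smul_mul_assoc, map_smul, e, smul_eq_mul,
        smul_eq_mul]
      ring
    | mem Y hYgen =>
      obtain ⟨ly, hly, rfl⟩ := hYgen
      induction hz' using Submodule.span_induction with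
      | zero => simp
      | add Z₁ Z₂ _ _ e₁ e₂ =>
        rw [map_add, add_mul, mul_add, map_add, mul_add, map_add, e₁, e₂]
        ring
      | smul c Z _ e =>
        rw [show Dm (c • Z) = c • Dm Z from map_smul Dm c Z, smul_mul_assoc, mul_smul_comm,
          map_smul, mul_smul_comm, map_smul, e, smul_eq_mul, smul_eq_mul]
        ring
      | mem Z hZgen =>
        obtain ⟨lz, hlz, rfl⟩ := hZgen
        show M ((x * PP A ly) * (Dm (PP A lz) * Dm w))
          = qh ^ ip A ε β * (M (x * Dm (PP A lz)) * M (PP A ly * Dm w))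
        rw [Dm_PP A Dm hD]
        have hshift : ∀ q ∈ shf lz, m + 1 ≤ q.2 := by
          rintro q hq
          obtain ⟨r, hr, rfl⟩ := List.mem_map.1 hq
          have := hlz r hr
          simp only
          omega
        have hcomm : PP A ly * PP A (shf lz)
            = qh ^ ip A (Wt ly) (Wt lz) • (PP A (shf lz) * PP A ly) := by
          have hcond : ∀ p ∈ ly, ∀ q ∈ shf lz, p.2 + 2 ≤ q.2 := by
            intro p hp q hq
            have h1 := hly p hp
            have h2 := hshift q hq
            omega
          have := comm_lists A ly (shf lz) hcond
          rwa [EE_eq_ip A ly lz] at this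
        have e1 : (x * PP A ly) * (PP A (shf lz) * Dm w)
            = x * ((PP A ly * PP A (shf lz)) * Dm w) := by simp only [mul_assoc]
        rw [e1, hcomm, smul_mul_assoc, mul_smul_comm, map_smul, smul_eq_mul]
        have e2 : x * (PP A (shf lz) * PP A ly * Dm w)
            = (x * PP A (shf lz)) * (PP A ly * Dm w) := by simp only [mul_assoc]
        rw [e2]
        have hG3 : M ((x * PP A (shf lz)) * (PP A ly * Dm w))
            = M (x * PP A (shf lz)) * M (PP A ly * Dm w) := by
          refine G3 A M hMone hMzero m ?_ ?_
          · exact mul_mem hxg (hAge_anti A (by omega) (PP_mem_hAge A (m + 1) hshift))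
          · exact mul_mem (hAle_mono A (by omega) (PP_mem_hAle A (m - 1) hly)) hDw_le
        rw [hG3, ← Dm_PP A Dm hD]
        by_cases h1 : Wt lz = β
        · by_cases h2 : Wt ly = ε
          · rw [h1, h2]
          · have h0 : M (PP A ly * Dm w) = 0 :=
              M_cross_zero A M hMzero Dm hD h2 (PP_mem_hAwt A ly) hww
            rw [h0]; ring
        · have h0 : M (x * Dm (PP A lz)) = 0 :=
            M_cross_zero A M hMzero Dm hD (fun h => h1 h.symm) hxw (PP_mem_hAwt A lz)
          rw [h0]; ring
  by_cases hP : M (x * Dm z) * M (y * Dm w) = 0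
  · rw [key, hP, mul_zero, mul_zero]
  · have hβδ : β = δ := by
      by_contra hne
      exact (mul_ne_zero_iff.1 hP).1 (M_cross_zero A M hMzero Dm hD hne hxw hzw)
    have hγε : γ = ε := by
      by_contra hne
      exact (mul_ne_zero_iff.1 hP).2 (M_cross_zero A M hMzero Dm hD hne hyw hww)
    rw [key, hγε, hβδ]

lemma G2 (m : ℤ) (β : I →₀ ℤ) (x y w : hA A) (hβ : β ≠ 0)
    (hxg : x ∈ hAge A m) (hxw : x ∈ hAwt A β) (hyl : y ∈ hAlt A m) (hwl : w ∈ hAlt A m) :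
    M ((x * y) * Dm w) = 0 := by
  have hDw_le : Dm w ∈ hAle A m := by
    have h1 : Dm w ∈ hAle A (m - 1 + 1) := Dm_mem_hAle A Dm hD hwl
    exact hAle_mono A (by omega) h1
  rw [mul_assoc, G3 A M hMone hMzero m hxg (mul_mem (hAle_mono A (by omega) hyl) hDw_le),
    M_wt_zero A M hMzero hβ hxw, zero_mul]

end final
end St13
/-- for homogeneous `x, z ∈ Â_{≥m}` and homogeneous `y, w ∈ Â_{<m}`,
`⟨⟨xy, zw⟩⟩ = q^{(wt y, wt z)} ⟨⟨x,z⟩⟩ ⟨⟨y,w⟩⟩`; in particular `⟨⟨xy, w⟩⟩ = 0` when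
`wt x ≠ 0`; moreover `M(xy) = M(x) M(y)` for `x ∈ Â_{≥m}`, `y ∈ Â_{≤m}`.
Here `⟨⟨x,y⟩⟩ := M(x 𝒟̄(y))`. -/
theorem statement13 (A : GCM I)
    (M : hA A →ₗ[𝕂] 𝕂)
    (hMone : M 1 = 1)
    (hMzero : ∀ (m : ℤ) (β : I →₀ ℤ), β ≠ 0 → ∀ y, y ∈ hAk A m → y ∈ hAwt A β →
      ∀ u ∈ hAgt A m, ∀ v ∈ hAlt A m, M (u * y * v) = 0)
    (Dm : hA A ≃ₐ[𝕂] hA A)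
    (hD : ∀ i p, Dm (ff A i p) = ff A i (p + 1))
    (m : ℤ) :
    (∀ (β γ δ ε : I →₀ ℤ) (x y z w : hA A),
      x ∈ hAge A m → x ∈ hAwt A β → z ∈ hAge A m → z ∈ hAwt A δ →
      y ∈ hAlt A m → y ∈ hAwt A γ → w ∈ hAlt A m → w ∈ hAwt A ε →
      M ((x * y) * Dm (z * w)) = qh ^ ip A γ δ * (M (x * Dm z) * M (y * Dm w))) ∧
    (∀ (β : I →₀ ℤ) (x y w : hA A), β ≠ 0 →
      x ∈ hAge A m → x ∈ hAwt A β → y ∈ hAlt A m → w ∈ hAlt A m →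
      M ((x * y) * Dm w) = 0) ∧
    (∀ x y : hA A, x ∈ hAge A m → y ∈ hAle A m → M (x * y) = M x * M y) :=
  ⟨fun β γ δ ε x y z w hxg hxw hzg hzw hyl hyw hwl hww =>
      St13.G1 A M hMone hMzero Dm hD m β γ δ ε x y z w hxg hxw hzg hzw hyl hyw hwl hww,
    fun β x y w hβ hxg hxw hyl hwl =>
      St13.G2 A M hMone hMzero Dm hD m β x y w hβ hxg hxw hyl hwl,
    fun x y hx hy => St13.G3 A M hMone hMzero m hx hy⟩

end
end
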